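/- arXiv:1309.4422 — 4 statements merged into one kernel-verified Lean document; each statement's English description precedes it below -/
import Mathlib

section
/- For ν > -1/2, α > |β|, μ ∈ ℝ, the function p(x) = ((α² − β²)^{ν+1/2} / (√π Γ(ν+1/2))) (|x−μ|/(2α))^ν e^{β(x−μ)} K_ν(α|x−μ|) is a probability density function on ℝ, i.e., it is nonnegative and integrates to 1. -/
open MeasureTheory ProbabilityTheory

/-- The modified Bessel function of the second kind, via the standard integral
representation `K_ν(x) = ∫_0^∞ exp(-x cosh t) cosh(ν t) dt` (valid for `x > 0`). -/
noncomputable def besselK (ν x : ℝ) : ℝ :=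
  ∫ t in Set.Ioi (0 : ℝ), Real.exp (-x * Real.cosh t) * Real.cosh (ν * t)

/-- The modified Bessel function of the first kind
`I_ν(x) = ∑_{k≥0} (x/2)^{ν+2k} / (Γ(ν+k+1) k!)`. -/
noncomputable def besselI (ν x : ℝ) : ℝ :=
  ∑' n : ℕ, (x / 2) ^ (ν + 2 * (n : ℝ)) / (Real.Gamma (ν + (n : ℝ) + 1) * (n : ℕ).factorial)

/-- Density of the Variance-Gamma distribution `VG₁(r, θ, σ, μ)`. -/
noncomputable def vg1pdf (r θ σ μ x : ℝ) : ℝ :=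
  1 / (σ * Real.sqrt Real.pi * Real.Gamma (r / 2)) * Real.exp (θ * (x - μ) / σ ^ 2) *
    (|x - μ| / (2 * Real.sqrt (θ ^ 2 + σ ^ 2))) ^ ((r - 1) / 2) *
    besselK ((r - 1) / 2) (Real.sqrt (θ ^ 2 + σ ^ 2) * |x - μ| / σ ^ 2)

/-- The Variance-Gamma distribution `VG₁(r, θ, σ, μ)` as a measure on `ℝ`. -/
noncomputable def vg1measure (r θ σ μ : ℝ) : Measure ℝ :=
  volume.withDensity fun x => ENNReal.ofReal (vg1pdf r θ σ μ x)

/-- Density of the Variance-Gamma distribution `VG₂(ν, α, β, μ)`. -/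
noncomputable def vg2pdf (ν α β μ x : ℝ) : ℝ :=
  (α ^ 2 - β ^ 2) ^ (ν + 1 / 2) / (Real.sqrt Real.pi * Real.Gamma (ν + 1 / 2)) *
    (|x - μ| / (2 * α)) ^ ν * Real.exp (β * (x - μ)) * besselK ν (α * |x - μ|)

/-- The Variance-Gamma distribution `VG₂(ν, α, β, μ)` as a measure on `ℝ`. -/
noncomputable def vg2measure (ν α β μ : ℝ) : Measure ℝ :=
  volume.withDensity fun x => ENNReal.ofReal (vg2pdf ν α β μ x)

open scoped NNReal ENNReal
open Real Set ProbabilityTheory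


-- T2: integrability of exp (d*u - z*cosh u)
lemma cosh_quad (x : ℝ) : x^2/8 ≤ Real.cosh x := by
  have h1 := Real.add_one_le_exp (|x|/2)
  have h2 : Real.exp |x| = Real.exp (|x|/2) * Real.exp (|x|/2) := by
    rw [← Real.exp_add]; ring_nf
  have h3 : Real.exp |x| ≤ 2 * Real.cosh x := by
    rw [← Real.cosh_abs, Real.cosh_eq]
    have := Real.exp_pos (-|x|)
    linarith
  nlinarith [abs_nonneg x, sq_abs x, Real.exp_pos (|x|/2)]

lemma intble_exp_cosh {z : ℝ} (hz : 0 < z) (d : ℝ) :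
    Integrable (fun u : ℝ => Real.exp (d*u - z * Real.cosh u)) := by
  have key : Integrable (fun u : ℝ => Real.exp (4*d^2/z) * Real.exp (-(z/16) * u^2)) :=
    (integrable_exp_neg_mul_sq (by positivity)).const_mul _
  refine key.mono' (Continuous.aestronglyMeasurable (by continuity)) ?_
  filter_upwards with u
  rw [norm_of_nonneg (Real.exp_nonneg _), ← Real.exp_add]
  apply Real.exp_le_exp.2
  have hc := cosh_quad u
  have hsq : 0 ≤ (z*u - 8*d)^2 := sq_nonneg _
  have h4 : d*u ≤ z*u^2/16 + 4*d^2/z := by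
    rw [← sub_nonneg]
    have : z*u^2/16 + 4*d^2/z - d*u = (z*u - 8*d)^2 / (16*z) := by field_simp; ring
    rw [this]; positivity
  nlinarith [mul_le_mul_of_nonneg_left hc hz.le]

lemma besselK_nonneg (ν x : ℝ) : 0 ≤ besselK ν x := by
  apply integral_nonneg
  intro t
  have := Real.cosh_pos (x := ν * t)
  positivity

lemma half_integral {ν z : ℝ} (hz : 0 < z) :
    Integrable (fun u : ℝ => Real.exp (ν*u - z * Real.cosh u)) ∧
    ∫ u : ℝ, Real.exp (ν*u - z * Real.cosh u) = 2 * besselK ν z := by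
  have h1 := intble_exp_cosh hz ν
  have h2 := intble_exp_cosh hz (-ν)
  refine ⟨h1, ?_⟩
  have hsplit : ∫ u : ℝ, Real.exp (ν*u - z * Real.cosh u)
      = (∫ u in Iic (0:ℝ), Real.exp (ν*u - z * Real.cosh u))
        + ∫ u in Ioi (0:ℝ), Real.exp (ν*u - z * Real.cosh u) :=
    (intervalIntegral.integral_Iic_add_Ioi h1.integrableOn h1.integrableOn).symm
  have hIic : (∫ u in Iic (0:ℝ), Real.exp (ν*u - z * Real.cosh u))
      = ∫ u in Ioi (0:ℝ), Real.exp (-ν*u - z * Real.cosh u) := by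
    have := integral_comp_neg_Ioi (0:ℝ) (fun u => Real.exp (ν*u - z * Real.cosh u))
    simp only [neg_zero] at this
    rw [← this]
    congr 1; ext u; rw [Real.cosh_neg]; ring_nf
  rw [hsplit, hIic, ← integral_add (h2.integrableOn) (h1.integrableOn)]
  rw [besselK, ← integral_const_mul]
  congr 1; ext u
  rw [Real.cosh_eq (ν*u)]
  rw [show -ν*u - z*Real.cosh u = (-(z*Real.cosh u)) + (-(ν*u)) by ring,
    show ν*u - z*Real.cosh u = (-(z*Real.cosh u)) + ν*u by ring,
    Real.exp_add, Real.exp_add]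
  ring_nf


lemma lemA {ν a b : ℝ} (ha : 0 < a) (hb : 0 < b) :
    IntegrableOn (fun s => s ^ (ν-1) * Real.exp (-(a*s + b/s))) (Ioi 0) ∧
    ∫ s in Ioi 0, s ^ (ν-1) * Real.exp (-(a*s + b/s)) =
      2 * Real.sqrt (b/a) ^ ν * besselK ν (2 * Real.sqrt (a*b)) := by
  set g : ℝ → ℝ := fun s => s ^ (ν-1) * Real.exp (-(a*s + b/s)) with hg
  set c := Real.sqrt (b/a) with hcdef
  set z := 2 * Real.sqrt (a*b) with hzdef
  have hc : 0 < c := Real.sqrt_pos.2 (div_pos hb ha)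
  have hz : 0 < z := by
    have : 0 < Real.sqrt (a*b) := Real.sqrt_pos.2 (mul_pos ha hb)
    positivity
  have hac : a * c = Real.sqrt (a*b) := by
    rw [hcdef, show a = Real.sqrt (a^2) by rw [Real.sqrt_sq ha.le], ← Real.sqrt_mul (by positivity)]
    congr 1; field_simp; rw [Real.sqrt_sq ha.le]
  have hbc : b / c = Real.sqrt (a*b) := by
    rw [hcdef, show b = Real.sqrt (b^2) by rw [Real.sqrt_sq hb.le], ← Real.sqrt_div (by positivity)]
    congr 1; field_simp; rw [Real.sqrt_sq hb.le]
  have key : ∀ u : ℝ, |c * Real.exp u| • g (c * Real.exp u)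
      = c ^ ν * Real.exp (ν*u - z * Real.cosh u) := by
    intro u
    have hx : 0 < c * Real.exp u := by positivity
    have h1 : -(a*(c * Real.exp u) + b/(c * Real.exp u)) = -(z * Real.cosh u) := by
      rw [Real.cosh_eq, hzdef]
      rw [show b / (c * Real.exp u) = (b / c) * Real.exp (-u) by
        rw [Real.exp_neg]; field_simp; try ring]
      rw [hbc, ← hac]; ring
    rw [smul_eq_mul, abs_of_pos hx, hg]
    simp only []
    rw [h1, Real.rpow_sub hx, Real.rpow_one]
    rw [Real.mul_rpow hc.le (Real.exp_nonneg u), ← Real.exp_mul]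
    rw [show ν*u - z * Real.cosh u = u*ν + (-(z * Real.cosh u)) by ring, Real.exp_add]
    field_simp
  have himg : (fun u : ℝ => c * Real.exp u) '' univ = Ioi 0 := by
    rw [image_univ]
    ext x
    simp only [mem_range, mem_Ioi]
    constructor
    · rintro ⟨u, rfl⟩; positivity
    · intro hx
      exact ⟨Real.log (x/c), by rw [Real.exp_log (by positivity)]; field_simp⟩
  have hderiv : ∀ u ∈ (univ : Set ℝ), HasDerivWithinAt (fun u => c * Real.exp u)
      (c * Real.exp u) univ u :=
    fun u _ => ((Real.hasDerivAt_exp u).const_mul c).hasDerivWithinAt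
  have hinj : InjOn (fun u : ℝ => c * Real.exp u) univ := by
    intro u _ v _ h
    exact Real.exp_injective (mul_left_cancel₀ hc.ne' h)
  have hI := half_integral (ν := ν) hz
  constructor
  · rw [← himg, integrableOn_image_iff_integrableOn_abs_deriv_smul MeasurableSet.univ hderiv hinj]
    rw [show (fun u => |c * Real.exp u| • g (c * Real.exp u))
      = fun u => c ^ ν * Real.exp (ν*u - z * Real.cosh u) from funext key]
    rw [integrableOn_univ]
    exact hI.1.const_mul _
  · rw [← himg, integral_image_eq_integral_abs_deriv_smul MeasurableSet.univ hderiv hinj]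
    rw [show (fun u => |c * Real.exp u| • g (c * Real.exp u))
      = fun u => c ^ ν * Real.exp (ν*u - z * Real.cosh u) from funext key]
    rw [Measure.restrict_univ, integral_const_mul, hI.2]
    ring

lemma density_eq {ν α β μ : ℝ} (hν : -1/2 < ν) (hαβ : |β| < α) {x : ℝ} (hx : x ≠ μ) :
    ∫⁻ s, ENNReal.ofReal (gaussianPDFReal (μ + β*s) s.toNNReal x *
        gammaPDFReal (ν + 1/2) ((α^2 - β^2)/2) s)
      = ENNReal.ofReal (vg2pdf ν α β μ x) := by
  have hα : 0 < α := (abs_nonneg β).trans_lt hαβ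
  have hβ2 : β^2 < α^2 := by nlinarith [abs_nonneg β, sq_abs β, le_abs_self β, neg_abs_le β]
  have hlam : 0 < (α^2 - β^2)/2 := by linarith
  have hk : 0 < ν + 1/2 := by linarith
  set k := ν + 1/2 with hkdef
  set lam := (α^2 - β^2)/2 with hlamdef
  set y := x - μ with hydef
  have hy : y ≠ 0 := sub_ne_zero.2 hx
  have hyabs : 0 < |y| := abs_pos.2 hy
  set a := α^2/2 with hadef
  set b := y^2/2 with hbdef
  have ha : 0 < a := by positivity
  have hb : 0 < b := by positivity
  set C := lam ^ k * Real.exp (β * y) / (Real.sqrt (2*Real.pi) * Real.Gamma k) with hCdef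
  have hC : 0 ≤ C := by
    have := Real.Gamma_pos_of_pos hk
    positivity
  have hba : Real.sqrt (b/a) = |y| / α := by
    rw [show b/a = (|y|/α)^2 by rw [div_pow, sq_abs]; rw [hbdef, hadef]; field_simp]
    exact Real.sqrt_sq (by positivity)
  have hab : 2 * Real.sqrt (a*b) = α * |y| := by
    rw [show a*b = (α*|y|/2)^2 by rw [div_pow, mul_pow, sq_abs]; rw [hbdef, hadef]; field_simp]
    rw [Real.sqrt_sq (by positivity)]; ring
  -- pointwise identity on Ioi 0
  have hpt : ∀ s ∈ Ioi (0:ℝ), gaussianPDFReal (μ + β*s) s.toNNReal x * gammaPDFReal k lam s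
      = C * (s ^ (ν-1) * Real.exp (-(a*s + b/s))) := by
    intro s hs
    rw [mem_Ioi] at hs
    have hcoe : (s.toNNReal : ℝ) = s := by rw [Real.coe_toNNReal', max_eq_left hs.le]
    simp only [gaussianPDFReal, gammaPDFReal, if_pos hs.le, hcoe]
    have h1 : Real.sqrt (2 * Real.pi * s) = Real.sqrt (2 * Real.pi) * Real.sqrt s :=
      Real.sqrt_mul (by positivity) s
    have h2 : s ^ (k - 1) = s ^ (ν - 1) * Real.sqrt s := by
      rw [show k - 1 = (ν - 1) + 1/2 by rw [hkdef]; ring, Real.rpow_add hs,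
        ← Real.sqrt_eq_rpow]
    have h3 : - (x - (μ + β*s))^2 / (2*s) + (-(lam * s)) = β * y + (-(a*s + b/s)) := by
      rw [hydef, hlamdef, hadef, hbdef]
      field_simp
      ring
    have hsqrt : 0 < Real.sqrt s := Real.sqrt_pos.2 hs
    have hE : rexp (-(x - (μ + β * s)) ^ 2 / (2 * s)) * rexp (-(lam * s))
        = rexp (β*y) * rexp (-(a*s + b/s)) := by
      rw [← Real.exp_add, ← Real.exp_add, h3]
    have hΓ : Real.Gamma k ≠ 0 := (Real.Gamma_pos_of_pos hk).ne'
    have hπ : Real.sqrt (2*Real.pi) ≠ 0 := by positivity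
    rw [h1, h2, mul_inv, hCdef]
    rw [show (√(2 * π))⁻¹ * (√s)⁻¹ * rexp (-(x - (μ + β * s)) ^ 2 / (2 * s)) *
        (lam ^ k / Real.Gamma k * (s ^ (ν - 1) * √s) * rexp (-(lam * s)))
      = ((√(2 * π))⁻¹ * (√s)⁻¹ * (lam ^ k / Real.Gamma k) * (s ^ (ν - 1) * √s)) *
        (rexp (-(x - (μ + β * s)) ^ 2 / (2 * s)) * rexp (-(lam * s))) from by ring, hE]
    field_simp
  have hzero : ∀ s ∈ Iic (0:ℝ), ENNReal.ofReal (gaussianPDFReal (μ + β*s) s.toNNReal x *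
      gammaPDFReal k lam s) = 0 := by
    intro s hs
    rcases lt_or_eq_of_le (mem_Iic.1 hs) with h | h
    · simp [gammaPDFReal, not_le.2 h]
    · subst h
      simp [gaussianPDFReal]
  have hg_nonneg : 0 ≤ᵐ[volume.restrict (Ioi (0:ℝ))]
      fun s => s ^ (ν-1) * Real.exp (-(a*s + b/s)) := by
    refine (ae_restrict_iff' measurableSet_Ioi).2 (ae_of_all _ fun s hs => ?_)
    have : (0:ℝ) < s := hs
    have h0 : (0:ℝ) ≤ s ^ (ν-1) * Real.exp (-(a*s + b/s)) := by positivity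
    exact h0
  rw [← lintegral_add_compl _ (measurableSet_Ioi (a := (0:ℝ))), compl_Ioi]
  rw [setLIntegral_congr_fun measurableSet_Iic hzero, lintegral_zero, add_zero]
  rw [setLIntegral_congr_fun measurableSet_Ioi
    (fun s hs => by rw [hpt s hs])]
  simp_rw [ENNReal.ofReal_mul hC]
  rw [lintegral_const_mul' _ _ ENNReal.ofReal_ne_top]
  rw [← ofReal_integral_eq_lintegral_ofReal (lemA ha hb).1 hg_nonneg]
  rw [(lemA ha hb).2, hba, hab]
  rw [← ENNReal.ofReal_mul hC]
  congr 1
  have h2k : (2:ℝ) ^ k = 2 ^ ν * Real.sqrt 2 := by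
    rw [hkdef, Real.rpow_add two_pos, ← Real.sqrt_eq_rpow]
  have hlamk : lam ^ k = (α^2 - β^2) ^ k / 2 ^ k := by
    rw [hlamdef, Real.div_rpow (by linarith) (by norm_num)]
  have hyν : (|y|/(2*α)) ^ ν = (|y|/α) ^ ν / 2 ^ ν := by
    rw [show |y|/(2*α) = (|y|/α)/2 by ring, Real.div_rpow (by positivity) (by norm_num)]
  have h2π : Real.sqrt (2*Real.pi) = Real.sqrt 2 * Real.sqrt Real.pi :=
    Real.sqrt_mul (by norm_num) _
  have hΓ : Real.Gamma k ≠ 0 := (Real.Gamma_pos_of_pos hk).ne'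
  have h2ν : (0:ℝ) < 2 ^ ν := Real.rpow_pos_of_pos two_pos ν
  have hsπ : (0:ℝ) < Real.sqrt Real.pi := Real.sqrt_pos.2 Real.pi_pos
  have hs2 : (0:ℝ) < Real.sqrt 2 := by positivity
  rw [vg2pdf, ← hydef, ← hkdef, hCdef, hlamk, h2k, h2π, hyν]
  field_simp
  linear_combination (-((α^2 - β^2) ^ k * besselK ν (α*|y|))) *
    (Real.mul_self_sqrt (show (0:ℝ) ≤ 2 by norm_num))


lemma measF {β μ k lam : ℝ} : Measurable (Function.uncurry fun (x s : ℝ) =>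
    ENNReal.ofReal (gaussianPDFReal (μ + β*s) s.toNNReal x * gammaPDFReal k lam s)) := by
  apply Measurable.ennreal_ofReal
  apply Measurable.mul
  · simp only [gaussianPDFReal]
    have h1 : Measurable fun p : ℝ×ℝ => ((p.2.toNNReal : ℝ)) :=
      measurable_coe_nnreal_real.comp (measurable_real_toNNReal.comp measurable_snd)
    apply Measurable.mul
    · exact (Real.continuous_sqrt.measurable.comp (measurable_const.mul h1)).inv
    · apply Real.measurable_exp.comp
      apply Measurable.div
      · exact ((measurable_fst.sub
          (measurable_const.add (measurable_const.mul measurable_snd))).pow_const 2).neg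
      · exact measurable_const.mul h1
  · exact (measurable_gammaPDFReal k lam).comp measurable_snd

lemma lint_one {ν α β μ : ℝ} (hν : -1/2 < ν) (hαβ : |β| < α) :
    ∫⁻ x : ℝ, ∫⁻ s : ℝ, ENNReal.ofReal (gaussianPDFReal (μ + β*s) s.toNNReal x *
      gammaPDFReal (ν + 1/2) ((α^2 - β^2)/2) s) = 1 := by
  have hα : 0 < α := (abs_nonneg β).trans_lt hαβ
  have hβ2 : β^2 < α^2 := by nlinarith [abs_nonneg β, sq_abs β, le_abs_self β, neg_abs_le β]
  have hlam : 0 < (α^2 - β^2)/2 := by linarith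
  have hk : 0 < ν + 1/2 := by linarith
  rw [lintegral_lintegral_swap measF.aemeasurable]
  have hne : ∀ᵐ s : ℝ, s ≠ (0:ℝ) := by
    rw [ae_iff]
    simp only [ne_eq, not_not, setOf_eq_eq_singleton]
    exact Real.volume_singleton
  have hcong : ∀ᵐ s : ℝ, (∫⁻ x : ℝ, ENNReal.ofReal (gaussianPDFReal (μ + β*s) s.toNNReal x *
      gammaPDFReal (ν + 1/2) ((α^2 - β^2)/2) s)) = gammaPDF (ν + 1/2) ((α^2 - β^2)/2) s := by
    filter_upwards [hne] with s hs
    simp_rw [ENNReal.ofReal_mul' (gammaPDFReal_nonneg hk hlam s)]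
    rw [lintegral_mul_const' _ _ ENNReal.ofReal_ne_top]
    rcases hs.lt_or_gt with h | h
    · rw [gammaPDF_eq, gammaPDFReal, if_neg (not_le.2 h)]
      simp
    · rw [lintegral_gaussianPDFReal_eq_one (μ + β*s) (by simp [Real.toNNReal_eq_zero, h, not_le.2 h]),
        one_mul, gammaPDF]
  rw [lintegral_congr_ae hcong]
  exact lintegral_gammaPDF_eq_one hk hlam

theorem stmt6 (ν α β μ : ℝ) (hν : -1/2 < ν) (hαβ : |β| < α) :
    (∀ x, 0 ≤ vg2pdf ν α β μ x) ∧ ∫ x, vg2pdf ν α β μ x = 1 := by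
  have hα : 0 < α := (abs_nonneg β).trans_lt hαβ
  have hβ2 : β^2 < α^2 := by nlinarith [abs_nonneg β, sq_abs β, le_abs_self β, neg_abs_le β]
  have hk : 0 < ν + 1/2 := by linarith
  have hnn : ∀ x, 0 ≤ vg2pdf ν α β μ x := by
    intro x
    rw [vg2pdf]
    refine mul_nonneg (mul_nonneg (mul_nonneg ?_ ?_) (Real.exp_nonneg _)) (besselK_nonneg _ _)
    · refine div_nonneg (Real.rpow_nonneg (by nlinarith) _) ?_
      have := Real.Gamma_pos_of_pos hk
      positivity
    · exact Real.rpow_nonneg (by positivity) _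
  refine ⟨hnn, ?_⟩
  have hne : ∀ᵐ x : ℝ, x ≠ μ := by
    rw [MeasureTheory.ae_iff]
    simp only [ne_eq, not_not, Set.setOf_eq_eq_singleton]
    exact Real.volume_singleton
  set F : ℝ → ℝ → ℝ≥0∞ := fun x s => ENNReal.ofReal (gaussianPDFReal (μ + β*s) s.toNNReal x *
    gammaPDFReal (ν + 1/2) ((α^2 - β^2)/2) s) with hF
  have hrep : ∀ x, x ≠ μ → (∫⁻ s : ℝ, F x s) = ENNReal.ofReal (vg2pdf ν α β μ x) :=
    fun x hx => density_eq hν hαβ hx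
  have hmG : Measurable (fun x => ∫⁻ s : ℝ, F x s) := Measurable.lintegral_prod_right measF
  have hfin : ∀ᵐ x : ℝ, (∫⁻ s : ℝ, F x s) < ⊤ := by
    filter_upwards [hne] with x hx
    rw [hrep x hx]
    exact ENNReal.ofReal_lt_top
  have hcong : (fun x => vg2pdf ν α β μ x) =ᵐ[volume] fun x => (∫⁻ s : ℝ, F x s).toReal := by
    filter_upwards [hne] with x hx
    rw [hrep x hx, ENNReal.toReal_ofReal (hnn x)]
  rw [integral_congr_ae hcong, integral_toReal hmG.aemeasurable hfin, lint_one hν hαβ,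
    ENNReal.toReal_one]
end

section
/- Let U ~ N(0,1) and V ~ Γ(r/2, 1/2) be independent, with r > 0, θ ∈ ℝ, σ > 0, μ ∈ ℝ. Then the random variable μ + θV + σ√V · U has the Variance-Gamma distribution VG₁(r, θ, σ, μ). -/
open MeasureTheory ProbabilityTheory

open Real Set
open scoped ENNReal NNReal

lemma my_lintegral_image {s : Set ℝ} {f f' : ℝ → ℝ}
    (hs : MeasurableSet s) (hf' : ∀ x ∈ s, HasDerivWithinAt f (f' x) s x)
    (hf : Set.InjOn f s) (g : ℝ → ℝ≥0∞) :
    ∫⁻ x in f '' s, g x = ∫⁻ x in s, ENNReal.ofReal |f' x| * g (f x) := by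
  simpa only [ContinuousLinearMap.det_toSpanSingleton] using
    lintegral_image_eq_lintegral_abs_det_fderiv_mul volume hs
      (fun x hx => (hf' x hx).hasFDerivWithinAt) hf g

lemma my_exp_image {c : ℝ} (hc : 0 < c) : (fun t => c * Real.exp t) '' Set.univ = Set.Ioi 0 := by
  ext y
  simp only [Set.image_univ, Set.mem_range, Set.mem_Ioi]
  constructor
  · rintro ⟨t, rfl⟩; positivity
  · intro hy; exact ⟨Real.log (y / c), by rw [Real.exp_log (by positivity), mul_div_cancel₀ _ hc.ne']⟩

lemma my_sub {c : ℝ} (hc : 0 < c) (g : ℝ → ℝ≥0∞) :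
    ∫⁻ v in Set.Ioi (0:ℝ), g v
      = ∫⁻ t, ENNReal.ofReal (c * Real.exp t) * g (c * Real.exp t) := by
  rw [← my_exp_image hc, my_lintegral_image MeasurableSet.univ
      (f' := fun t => c * Real.exp t)
      (fun x _ => ((Real.hasDerivAt_exp x).const_mul c).hasDerivWithinAt)
      (fun a _ b _ h => Real.exp_injective (mul_left_cancel₀ hc.ne' h)) g]
  rw [MeasureTheory.setLIntegral_univ]
  congr 1; ext t
  rw [abs_of_pos (by positivity)]

lemma my_neg (g : ℝ → ℝ≥0∞) :
    ∫⁻ x in Set.Iio (0:ℝ), g x = ∫⁻ x in Set.Ioi (0:ℝ), g (-x) := by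
  have himg : (fun x : ℝ => -x) '' Set.Ioi 0 = Set.Iio 0 := by
    ext y; simp only [Set.mem_image, Set.mem_Ioi, Set.mem_Iio]
    constructor
    · rintro ⟨x, hx, rfl⟩; linarith
    · intro hy; exact ⟨-y, by linarith, by ring⟩
  rw [← himg, my_lintegral_image measurableSet_Ioi (f' := fun _ => (-1:ℝ))
      (fun x _ => (hasDerivAt_neg x).hasDerivWithinAt)
      (fun a _ b _ h => neg_injective h) g]
  simp

lemma my_split (f : ℝ → ℝ≥0∞) :
    ∫⁻ x, f x = (∫⁻ x in Set.Iio (0:ℝ), f x) + ∫⁻ x in Set.Ioi (0:ℝ), f x := by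
  rw [← MeasureTheory.setLIntegral_univ f, ← MeasureTheory.lintegral_union measurableSet_Ioi
      ((Set.Iio_disjoint_Ici le_rfl).mono_right Set.Ioi_subset_Ici_self)]
  apply MeasureTheory.setLIntegral_congr
  rw [Set.Iio_union_Ioi]
  refine Filter.EventuallyEq.symm ?_
  rw [MeasureTheory.ae_eq_univ, compl_compl]
  simp

noncomputable def besselL (ν x : ℝ) : ℝ≥0∞ :=
  ∫⁻ t in Set.Ioi (0:ℝ), ENNReal.ofReal (Real.exp (-x * Real.cosh t) * Real.cosh (ν * t))

lemma my_key (ν : ℝ) {a b : ℝ} (ha : 0 < a) (hb : 0 < b) :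
    ∫⁻ v in Set.Ioi (0:ℝ), ENNReal.ofReal (v ^ (ν-1) * Real.exp (-(a/v) - b*v))
      = ENNReal.ofReal ((a/b) ^ (ν/2)) * (2 * besselL ν (2 * Real.sqrt (a*b))) := by
  have hab : (0:ℝ) < a / b := by positivity
  set c := Real.sqrt (a/b) with hcdef
  have hc : 0 < c := Real.sqrt_pos.mpr hab
  have hc2 : c ^ 2 = a / b := Real.sq_sqrt hab.le
  have hbc : b * c = Real.sqrt (a*b) := by
    rw [hcdef, ← Real.sqrt_sq hb.le, ← Real.sqrt_mul (sq_nonneg b)]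
    congr 1
    field_simp
    rw [Real.sq_sqrt (sq_nonneg b)]
  have hac : a / c = Real.sqrt (a*b) := by
    have hba : b * c ^ 2 = a := by rw [hc2]; field_simp
    rw [← hbc]
    field_simp
    nlinarith [hba]
  set K := Real.sqrt (a*b) with hKdef
  have hKpos : 0 < K := Real.sqrt_pos.mpr (by positivity)
  rw [my_sub hc]
  have step1 : ∀ t : ℝ, ENNReal.ofReal (c * Real.exp t) *
      ENNReal.ofReal ((c * Real.exp t) ^ (ν-1) * Real.exp (-(a/(c * Real.exp t)) - b*(c * Real.exp t)))
      = ENNReal.ofReal (c ^ ν) * ENNReal.ofReal (Real.exp (ν * t) * Real.exp (-(2*K) * Real.cosh t)) := by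
    intro t
    have he : (0:ℝ) < Real.exp t := Real.exp_pos t
    rw [← ENNReal.ofReal_mul (by positivity), ← ENNReal.ofReal_mul (by positivity : (0:ℝ) ≤ c ^ ν)]
    congr 1
    have h1 : (c * Real.exp t) ^ (ν-1) = c ^ (ν-1) * Real.exp (t * (ν-1)) := by
      rw [Real.mul_rpow hc.le he.le, Real.rpow_def_of_pos he, Real.log_exp]
    have h2 : a / (c * Real.exp t) = K * Real.exp (-t) := by
      rw [Real.exp_neg, ← hac]
      field_simp
    have h3 : b * (c * Real.exp t) = K * Real.exp t := by rw [← hbc]; ring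
    have hcv : c * c ^ (ν - 1) = c ^ ν := by
      nth_rewrite 1 [← Real.rpow_one c]
      rw [← Real.rpow_add hc]
      congr 1
      ring
    rw [h1, h2, h3]
    calc c * Real.exp t * (c ^ (ν-1) * Real.exp (t * (ν-1)) *
            Real.exp (-(K * Real.exp (-t)) - K * Real.exp t))
        = (c * c ^ (ν-1)) * (Real.exp t * (Real.exp (t * (ν-1)) *
            Real.exp (-(K * Real.exp (-t)) - K * Real.exp t))) := by ring
      _ = c ^ ν * Real.exp (t + (t * (ν-1) + (-(K * Real.exp (-t)) - K * Real.exp t))) := by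
            rw [hcv, ← Real.exp_add, ← Real.exp_add]
      _ = c ^ ν * (Real.exp (ν * t) * Real.exp (-(2*K) * Real.cosh t)) := by
            rw [← Real.exp_add]
            congr 2
            rw [Real.cosh_eq]
            ring
  calc ∫⁻ t, ENNReal.ofReal (c * Real.exp t) *
        ENNReal.ofReal ((c * Real.exp t) ^ (ν-1) * Real.exp (-(a/(c * Real.exp t)) - b*(c * Real.exp t)))
      = ∫⁻ t, ENNReal.ofReal (c ^ ν) *
          ENNReal.ofReal (Real.exp (ν * t) * Real.exp (-(2*K) * Real.cosh t)) :=
        lintegral_congr step1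
    _ = ENNReal.ofReal (c ^ ν) *
          ∫⁻ t, ENNReal.ofReal (Real.exp (ν * t) * Real.exp (-(2*K) * Real.cosh t)) :=
        lintegral_const_mul' _ _ ENNReal.ofReal_ne_top
    _ = ENNReal.ofReal ((a/b) ^ (ν/2)) * (2 * besselL ν (2*K)) := by
        congr 1
        · congr 1
          rw [hcdef, Real.sqrt_eq_rpow, ← Real.rpow_mul hab.le]
          congr 1
          ring
        · rw [my_split, my_neg]
          have hmeas : Measurable fun t : ℝ =>
              ENNReal.ofReal (Real.exp (ν * -t) * Real.exp (-(2*K) * Real.cosh (-t))) := by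
            apply Measurable.ennreal_ofReal
            exact ((Real.continuous_exp.comp (continuous_const.mul continuous_neg)).mul
              (Real.continuous_exp.comp
                (continuous_const.mul (Real.continuous_cosh.comp continuous_neg)))).measurable
          rw [← lintegral_add_left hmeas]
          have step2 : ∀ t : ℝ,
              ENNReal.ofReal (Real.exp (ν * -t) * Real.exp (-(2*K) * Real.cosh (-t))) +
                ENNReal.ofReal (Real.exp (ν * t) * Real.exp (-(2*K) * Real.cosh t))
              = 2 * ENNReal.ofReal (Real.exp (-(2*K) * Real.cosh t) * Real.cosh (ν * t)) := by
            intro t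
            rw [Real.cosh_neg, ← ENNReal.ofReal_add (by positivity) (by positivity)]
            rw [(by norm_num : (2:ℝ≥0∞) = ENNReal.ofReal 2), ← ENNReal.ofReal_mul (by norm_num)]
            congr 1
            rw [Real.cosh_eq (ν * t), mul_neg]
            ring
          rw [lintegral_congr step2, lintegral_const_mul' 2 _ (by norm_num)]
          rfl

lemma my_cont (ν x : ℝ) :
    Continuous fun t : ℝ => Real.exp (-x * Real.cosh t) * Real.cosh (ν * t) := by
  fun_prop

lemma my_besselK_eq {ν x : ℝ} (h : besselL ν x ≠ ∞) :
    ENNReal.ofReal (besselK ν x) = besselL ν x := by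
  rw [besselK, MeasureTheory.integral_eq_lintegral_of_nonneg_ae
      (Filter.Eventually.of_forall fun t =>
        mul_nonneg (Real.exp_pos _).le (Real.cosh_pos _).le)
      (my_cont ν x).aestronglyMeasurable]
  exact ENNReal.ofReal_toReal h

lemma my_density (r θ σ μ x : ℝ) (hr : 0 < r) (hσ : 0 < σ) (hx : x ≠ μ) :
    ∫⁻ v in Set.Ioi (0:ℝ), ENNReal.ofReal (gammaPDFReal (r/2) (1/2) v *
        ((Real.sqrt (2*Real.pi*(σ^2*v)))⁻¹ * Real.exp (-(x - (μ+θ*v))^2 / (2*(σ^2*v)))))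
      = ENNReal.ofReal (1 / (σ * Real.sqrt Real.pi * Real.Gamma (r / 2)) *
            Real.exp (θ * (x - μ) / σ ^ 2) *
            (|x - μ| / (2 * Real.sqrt (θ ^ 2 + σ ^ 2))) ^ ((r - 1) / 2)) *
          besselL ((r-1)/2) (Real.sqrt (θ ^ 2 + σ ^ 2) * |x - μ| / σ ^ 2) := by
  have hΓ : 0 < Real.Gamma (r/2) := Real.Gamma_pos_of_pos (by positivity)
  set ν : ℝ := (r-1)/2 with hν
  set a : ℝ := (x-μ)^2 / (2*σ^2) with hadef
  set b : ℝ := (θ^2+σ^2) / (2*σ^2) with hbdef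
  have hxm : x - μ ≠ 0 := sub_ne_zero.mpr hx
  have ha : 0 < a := by positivity
  have hb : 0 < b := by positivity
  set A : ℝ := ((1:ℝ)/2) ^ (r/2 : ℝ) / Real.Gamma (r/2) with hA
  set S : ℝ := (Real.sqrt (2*Real.pi*σ^2))⁻¹ with hS
  have hApos : 0 < A := by
    rw [hA]; positivity
  have hSpos : 0 < S := by rw [hS]; positivity
  set C₁ : ℝ := A * S * Real.exp (θ*(x-μ)/σ^2) with hC₁
  have hC₁pos : 0 < C₁ := by rw [hC₁]; positivity
  -- pointwise identity on Ioi 0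
  have pointwise : ∀ v ∈ Set.Ioi (0:ℝ),
      ENNReal.ofReal (gammaPDFReal (r/2) (1/2) v *
        ((Real.sqrt (2*Real.pi*(σ^2*v)))⁻¹ * Real.exp (-(x - (μ+θ*v))^2 / (2*(σ^2*v)))))
      = ENNReal.ofReal C₁ * ENNReal.ofReal (v ^ (ν-1) * Real.exp (-(a/v) - b*v)) := by
    intro v hv
    rw [Set.mem_Ioi] at hv
    rw [← ENNReal.ofReal_mul hC₁pos.le]
    congr 1
    have hsq : (Real.sqrt (2*Real.pi*(σ^2*v)))⁻¹ = S * v ^ (-(1/2) : ℝ) := by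
      rw [show 2*Real.pi*(σ^2*v) = (2*Real.pi*σ^2)*v by ring,
        Real.sqrt_mul (by positivity) v, mul_inv]
      congr 1
      rw [Real.sqrt_eq_rpow, Real.rpow_neg hv.le]
    have hvpow : v ^ (r/2-1 : ℝ) * v ^ (-(1/2) : ℝ) = v ^ (ν - 1) := by
      rw [← Real.rpow_add hv]
      congr 1
      rw [hν]; ring
    have hexp : Real.exp (-(1/2*v)) * Real.exp (-(x - (μ+θ*v))^2 / (2*(σ^2*v)))
        = Real.exp (θ*(x-μ)/σ^2) * Real.exp (-(a/v) - b*v) := by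
      rw [← Real.exp_add, ← Real.exp_add]
      congr 1
      rw [hadef, hbdef]
      field_simp
      ring
    rw [gammaPDFReal, if_pos hv.le]
    calc ((1:ℝ)/2) ^ (r/2 : ℝ) / Real.Gamma (r/2) * v ^ (r/2-1 : ℝ) * Real.exp (-(1/2*v)) *
          ((Real.sqrt (2*Real.pi*(σ^2*v)))⁻¹ * Real.exp (-(x - (μ+θ*v))^2 / (2*(σ^2*v))))
        = (A * S) * ((v ^ (r/2-1 : ℝ) * v ^ (-(1/2) : ℝ)) *
            (Real.exp (-(1/2*v)) * Real.exp (-(x - (μ+θ*v))^2 / (2*(σ^2*v))))) := by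
          rw [hsq, hA]; ring
      _ = (A * S) * (v ^ (ν-1) * (Real.exp (θ*(x-μ)/σ^2) * Real.exp (-(a/v) - b*v))) := by
          rw [hvpow, hexp]
      _ = C₁ * (v ^ (ν-1) * Real.exp (-(a/v) - b*v)) := by rw [hC₁]; ring
  rw [MeasureTheory.setLIntegral_congr_fun measurableSet_Ioi
      pointwise, MeasureTheory.lintegral_const_mul' _ _
      ENNReal.ofReal_ne_top, my_key ν ha hb]
  -- coefficient bookkeeping
  have hW : (0:ℝ) < θ^2 + σ^2 := by positivity
  have hy : 2 * Real.sqrt (a*b) = Real.sqrt (θ^2+σ^2) * |x-μ| / σ^2 := by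
    have hab2 : a * b = ((x-μ) * Real.sqrt (θ^2+σ^2) / (2*σ^2))^2 := by
      rw [hadef, hbdef, div_pow, mul_pow, Real.sq_sqrt hW.le]
      ring
    rw [hab2, Real.sqrt_sq_eq_abs, abs_div, abs_mul,
      abs_of_pos (by positivity : (0:ℝ) < 2*σ^2), abs_of_nonneg (Real.sqrt_nonneg _)]
    ring
  rw [hy]
  set q : ℝ := |x-μ| / Real.sqrt (θ^2+σ^2) with hqdef
  have hqpos : 0 < q := by rw [hqdef]; positivity
  have hq : (a/b) ^ (ν/2 : ℝ) = q ^ ν := by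
    have hab : a / b = q ^ (2:ℕ) := by
      rw [hadef, hbdef, hqdef, div_pow, sq_abs, Real.sq_sqrt hW.le]
      field_simp
    rw [hab, ← Real.rpow_natCast q 2, ← Real.rpow_mul hqpos.le]
    norm_num
    congr 1
    ring
  have hqd : (|x-μ| / (2 * Real.sqrt (θ^2+σ^2))) ^ ν = q ^ ν * ((1:ℝ)/2) ^ ν := by
    rw [show |x-μ| / (2 * Real.sqrt (θ^2+σ^2)) = q * (1/2) by rw [hqdef]; ring,
      Real.mul_rpow hqpos.le (by norm_num)]
  have hsplit : Real.sqrt (2*Real.pi*σ^2) = Real.sqrt 2 * Real.sqrt Real.pi * σ := by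
    rw [Real.sqrt_mul (by positivity) (σ^2), Real.sqrt_sq hσ.le,
      Real.sqrt_mul (by norm_num : (0:ℝ) ≤ 2)]
  have h12 : ((1:ℝ)/2) ^ (ν : ℝ) = ((1:ℝ)/2) ^ (r/2 : ℝ) * Real.sqrt 2 := by
    rw [hν, show (r-1)/2 = r/2 + (-(1/2) : ℝ) by ring,
      Real.rpow_add (by norm_num : (0:ℝ) < 1/2)]
    congr 1
    rw [Real.rpow_neg (by norm_num), ← Real.sqrt_eq_rpow,
      show (1/2:ℝ) = 2⁻¹ by norm_num, Real.sqrt_inv, inv_inv]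
  have h22 : Real.sqrt 2 * Real.sqrt 2 = 2 := Real.mul_self_sqrt (by norm_num)
  have hπ : (0:ℝ) < Real.sqrt Real.pi := Real.sqrt_pos.mpr Real.pi_pos
  have h2pos : (0:ℝ) < Real.sqrt 2 := by positivity
  have scalar : 2 * (A * S) = 1 / (σ * Real.sqrt Real.pi * Real.Gamma (r/2)) * ((1:ℝ)/2) ^ ν := by
    rw [hA, hS, hsplit, h12]
    field_simp
    linear_combination (-1 : ℝ) * h22
  calc ENNReal.ofReal C₁ * (ENNReal.ofReal ((a/b) ^ (ν/2:ℝ)) *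
        (2 * besselL ν (Real.sqrt (θ^2+σ^2) * |x-μ| / σ^2)))
      = ENNReal.ofReal (C₁ * (a/b) ^ (ν/2:ℝ) * 2) *
          besselL ν (Real.sqrt (θ^2+σ^2) * |x-μ| / σ^2) := by
        rw [ENNReal.ofReal_mul (by positivity : (0:ℝ) ≤ C₁ * (a/b) ^ (ν/2:ℝ)),
          ENNReal.ofReal_mul hC₁pos.le, ENNReal.ofReal_ofNat]
        ring
    _ = ENNReal.ofReal (1 / (σ * Real.sqrt Real.pi * Real.Gamma (r / 2)) *
            Real.exp (θ * (x - μ) / σ ^ 2) *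
            (|x - μ| / (2 * Real.sqrt (θ ^ 2 + σ ^ 2))) ^ ν) *
          besselL ν (Real.sqrt (θ^2+σ^2) * |x-μ| / σ^2) := by
        congr 2
        rw [hqd, hq, hC₁]
        linear_combination (Real.exp (θ*(x-μ)/σ^2) * q ^ ν) * scalar

lemma my_gauss_map (σ θ μ : ℝ) (hσ : 0 < σ) {v : ℝ} (hv : 0 < v) {s : Set ℝ}
    (hs : MeasurableSet s) :
    (gaussianReal 0 1) ((fun u => μ + θ*v + σ*Real.sqrt v * u) ⁻¹' s)
      = ∫⁻ x in s, ENNReal.ofReal ((Real.sqrt (2*Real.pi*(σ^2*v)))⁻¹ *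
          Real.exp (-(x - (μ+θ*v))^2 / (2*(σ^2*v)))) := by
  have hd : (0:ℝ) < σ * Real.sqrt v := by positivity
  have hmeas : Measurable fun u : ℝ => μ + θ*v + σ*Real.sqrt v * u := by fun_prop
  set τ : ℝ≥0 := Real.toNNReal (σ^2*v) with hτdef
  have hτcoe : (τ : ℝ) = σ^2*v := Real.coe_toNNReal _ (by positivity)
  have hτ0 : τ ≠ 0 := by
    intro h
    have h2 : (τ : ℝ) = 0 := by rw [h]; simp
    rw [hτcoe] at h2
    have : (0:ℝ) < σ^2*v := by positivity
    linarith
  have hmapg : Measure.map (fun u => μ + θ*v + σ*Real.sqrt v * u) (gaussianReal 0 1)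
      = gaussianReal (μ+θ*v) τ := by
    have hfun : (fun u : ℝ => μ + θ*v + σ*Real.sqrt v * u)
        = (fun z => z + (μ + θ*v)) ∘ (fun u => (σ*Real.sqrt v) * u) := by
      funext u
      simp only [Function.comp_apply]
      ring
    rw [hfun, ← Measure.map_map (measurable_add_const _) (measurable_const_mul _),
      gaussianReal_map_const_mul, gaussianReal_map_add_const]
    congr 1
    · simp
    · apply NNReal.coe_injective
      rw [hτcoe]
      push_cast
      rw [mul_one, mul_pow, Real.sq_sqrt hv.le]
  rw [← Measure.map_apply hmeas hs, hmapg, gaussianReal_apply _ hτ0 s]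
  apply MeasureTheory.setLIntegral_congr_fun hs
  intro x _
  rw [gaussianPDF, gaussianPDFReal, hτcoe]

noncomputable def mixf (r θ σ μ : ℝ) (v x : ℝ) : ℝ :=
  gammaPDFReal (r/2) (1/2) v *
      ((Real.sqrt (2*Real.pi*(σ^2*v)))⁻¹ * Real.exp (-(x - (μ+θ*v))^2 / (2*(σ^2*v))))

lemma gausspart_meas (θ σ μ : ℝ) :
    Measurable (fun p : ℝ × ℝ => (Real.sqrt (2*Real.pi*(σ^2*p.1)))⁻¹ *
      Real.exp (-(p.2 - (μ+θ*p.1))^2 / (2*(σ^2*p.1)))) := by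
  fun_prop

noncomputable def mixD (r θ σ μ : ℝ) (x : ℝ) : ℝ≥0∞ :=
  ∫⁻ v in Set.Ioi (0:ℝ), ENNReal.ofReal (mixf r θ σ μ v x)

lemma mixf_meas (r θ σ μ : ℝ) :
    Measurable (Function.uncurry fun v x => ENNReal.ofReal (mixf r θ σ μ v x)) := by
  apply Measurable.ennreal_ofReal
  exact (((measurable_gammaPDFReal (r/2) (1/2)).comp measurable_fst).mul
    (gausspart_meas θ σ μ) : Measurable fun p : ℝ × ℝ => mixf r θ σ μ p.1 p.2)

lemma mixf_meas' (r θ σ μ : ℝ) :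
    Measurable (Function.uncurry fun x v => ENNReal.ofReal (mixf r θ σ μ v x)) :=
  (mixf_meas r θ σ μ).comp measurable_swap

lemma mixD_meas (r θ σ μ : ℝ) : Measurable (mixD r θ σ μ) :=
  Measurable.lintegral_prod_right (mixf_meas' r θ σ μ)

lemma my_core (r θ σ μ : ℝ) (hr : 0 < r) (hσ : 0 < σ) :
    Measure.map (fun p : ℝ × ℝ => μ + θ * p.2 + σ * Real.sqrt p.2 * p.1)
        ((gaussianReal 0 1).prod (gammaMeasure (r/2) (1/2)))
      = volume.withDensity (mixD r θ σ μ) := by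
  haveI : IsProbabilityMeasure (gammaMeasure (r/2) (1/2)) :=
    isProbabilityMeasure_gammaMeasure (by positivity) (by norm_num)
  have hgmeas : Measurable (fun p : ℝ × ℝ => μ + θ * p.2 + σ * Real.sqrt p.2 * p.1) := by
    fun_prop
  ext s hs
  rw [Measure.map_apply hgmeas hs, Measure.prod_apply_symm (hgmeas hs),
    withDensity_apply _ hs]
  have hG0 : ∀ᵐ v ∂(gammaMeasure (r/2) (1/2)), v ∈ Set.Ioi (0:ℝ) := by
    rw [ae_iff]
    have hset : {v : ℝ | ¬ v ∈ Set.Ioi (0:ℝ)} = Set.Iic 0 := by ext w; simp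
    rw [hset, gammaMeasure, withDensity_apply _ measurableSet_Iic,
      MeasureTheory.setLIntegral_congr ((MeasureTheory.Iio_ae_eq_Iic (a := (0:ℝ))).symm),
      MeasureTheory.setLIntegral_congr_fun measurableSet_Iio
        (fun v (hv : v < 0) => gammaPDF_of_neg hv)]
    simp
  have hindmeas : Measurable fun v => Set.indicator (Set.Ioi (0:ℝ)) (fun v => ∫⁻ x in s,
      ENNReal.ofReal ((Real.sqrt (2*Real.pi*(σ^2*v)))⁻¹ *
        Real.exp (-(x - (μ+θ*v))^2 / (2*(σ^2*v))))) v := by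
    apply Measurable.indicator _ measurableSet_Ioi
    apply Measurable.lintegral_prod_right
      (f := fun v x => ENNReal.ofReal ((Real.sqrt (2*Real.pi*(σ^2*v)))⁻¹ *
        Real.exp (-(x - (μ+θ*v))^2 / (2*(σ^2*v)))))
    exact (gausspart_meas θ σ μ).ennreal_ofReal
  calc ∫⁻ v, (gaussianReal 0 1) ((fun u => (u, v)) ⁻¹'
        ((fun p : ℝ × ℝ => μ + θ * p.2 + σ * Real.sqrt p.2 * p.1) ⁻¹' s))
        ∂(gammaMeasure (r/2) (1/2))
      = ∫⁻ v, Set.indicator (Set.Ioi (0:ℝ)) (fun v => ∫⁻ x in s,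
          ENNReal.ofReal ((Real.sqrt (2*Real.pi*(σ^2*v)))⁻¹ *
            Real.exp (-(x - (μ+θ*v))^2 / (2*(σ^2*v))))) v ∂(gammaMeasure (r/2) (1/2)) := by
        apply lintegral_congr_ae
        filter_upwards [hG0] with v hv
        rw [Set.indicator_of_mem hv]
        exact my_gauss_map σ θ μ hσ hv hs
    _ = ∫⁻ v, gammaPDF (r/2) (1/2) v * Set.indicator (Set.Ioi (0:ℝ)) (fun v => ∫⁻ x in s,
          ENNReal.ofReal ((Real.sqrt (2*Real.pi*(σ^2*v)))⁻¹ *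
            Real.exp (-(x - (μ+θ*v))^2 / (2*(σ^2*v))))) v := by
        rw [gammaMeasure, lintegral_withDensity_eq_lintegral_mul _
          (by exact (measurable_gammaPDFReal _ _).ennreal_ofReal :
            Measurable (gammaPDF (r/2) (1/2))) hindmeas]
        rfl
    _ = ∫⁻ v in Set.Ioi (0:ℝ), ∫⁻ x in s, ENNReal.ofReal (mixf r θ σ μ v x) := by
        rw [my_split]
        have h1 : ∫⁻ v in Set.Iio (0:ℝ), gammaPDF (r/2) (1/2) v *
            Set.indicator (Set.Ioi (0:ℝ)) (fun v => ∫⁻ x in s,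
              ENNReal.ofReal ((Real.sqrt (2*Real.pi*(σ^2*v)))⁻¹ *
                Real.exp (-(x - (μ+θ*v))^2 / (2*(σ^2*v))))) v = 0 := by
          rw [MeasureTheory.setLIntegral_congr_fun measurableSet_Iio
            (fun v (hv : v < 0) => by
              rw [gammaPDF_of_neg hv, zero_mul])]
          simp
        rw [h1, zero_add]
        apply MeasureTheory.setLIntegral_congr_fun measurableSet_Ioi
        intro v hv
        dsimp only
        rw [Set.indicator_of_mem hv, gammaPDF_of_nonneg (le_of_lt hv),
          ← MeasureTheory.lintegral_const_mul' _ _ ENNReal.ofReal_ne_top]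
        apply MeasureTheory.setLIntegral_congr_fun hs
        intro x _
        dsimp only
        rw [mixf, ENNReal.ofReal_mul
          (gammaPDFReal_nonneg (by positivity : (0:ℝ) < r/2) (by norm_num : (0:ℝ) < 1/2) v),
          gammaPDFReal, if_pos (le_of_lt hv)]
    _ = ∫⁻ x in s, mixD r θ σ μ x := by
        unfold mixD
        exact MeasureTheory.lintegral_lintegral_swap (mixf_meas r θ σ μ).aemeasurable

theorem stmt8 {Ω : Type*} [MeasureSpace Ω] [IsProbabilityMeasure (ℙ : Measure Ω)]
    (r θ σ μ : ℝ) (hr : 0 < r) (hσ : 0 < σ)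
    (U V : Ω → ℝ) (hU : Measurable U) (hV : Measurable V)
    (hUlaw : Measure.map U ℙ = gaussianReal 0 1)
    (hVlaw : Measure.map V ℙ = gammaMeasure (r / 2) (1 / 2))
    (hind : IndepFun U V ℙ) :
    Measure.map (fun ω => μ + θ * V ω + σ * Real.sqrt (V ω) * U ω) ℙ
      = vg1measure r θ σ μ := by
  haveI hGprob : IsProbabilityMeasure (gammaMeasure (r/2) (1/2)) :=
    isProbabilityMeasure_gammaMeasure (by positivity) (by norm_num)
  have hgmeas : Measurable (fun p : ℝ × ℝ => μ + θ * p.2 + σ * Real.sqrt p.2 * p.1) := by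
    fun_prop
  have hUV : Measure.map (fun ω => (U ω, V ω)) ℙ
      = (gaussianReal 0 1).prod (gammaMeasure (r/2) (1/2)) := by
    rw [← hUlaw, ← hVlaw]
    exact (indepFun_iff_map_prod_eq_prod_map_map hU.aemeasurable hV.aemeasurable).mp hind
  have hmap : Measure.map (fun ω => μ + θ * V ω + σ * Real.sqrt (V ω) * U ω) ℙ
      = Measure.map (fun p : ℝ × ℝ => μ + θ * p.2 + σ * Real.sqrt p.2 * p.1)
          ((gaussianReal 0 1).prod (gammaMeasure (r/2) (1/2))) := by
    rw [← hUV, Measure.map_map hgmeas (hU.prodMk hV)]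
    rfl
  rw [hmap, my_core r θ σ μ hr hσ]
  have hmass : ∫⁻ x, mixD r θ σ μ x = 1 := by
    have h1 : (volume.withDensity (mixD r θ σ μ)) Set.univ = 1 := by
      rw [← my_core r θ σ μ hr hσ, Measure.map_apply hgmeas MeasurableSet.univ,
        Set.preimage_univ]
      exact measure_univ
    rwa [withDensity_apply _ MeasurableSet.univ, Measure.restrict_univ] at h1
  have hfin : ∀ᵐ x : ℝ, mixD r θ σ μ x < ∞ :=
    ae_lt_top (mixD_meas r θ σ μ) (by rw [hmass]; exact ENNReal.one_ne_top)
  have hne : ∀ᵐ x : ℝ, x ≠ μ := by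
    rw [ae_iff]
    have h2 : {x : ℝ | ¬ x ≠ μ} = {μ} := by ext w; simp
    rw [h2]
    exact measure_singleton μ
  unfold vg1measure
  apply withDensity_congr_ae
  filter_upwards [hfin, hne] with x hxfin hxμ
  have hd : mixD r θ σ μ x
      = ENNReal.ofReal (1 / (σ * Real.sqrt Real.pi * Real.Gamma (r / 2)) *
            Real.exp (θ * (x - μ) / σ ^ 2) *
            (|x - μ| / (2 * Real.sqrt (θ ^ 2 + σ ^ 2))) ^ ((r - 1) / 2)) *
          besselL ((r-1)/2) (Real.sqrt (θ ^ 2 + σ ^ 2) * |x - μ| / σ ^ 2) :=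
    my_density r θ σ μ x hr hσ hxμ
  have hΓ : 0 < Real.Gamma (r/2) := Real.Gamma_pos_of_pos (by positivity)
  have hxm : x - μ ≠ 0 := sub_ne_zero.mpr hxμ
  have hcoefpos : 0 < 1 / (σ * Real.sqrt Real.pi * Real.Gamma (r / 2)) *
      Real.exp (θ * (x - μ) / σ ^ 2) *
      (|x - μ| / (2 * Real.sqrt (θ ^ 2 + σ ^ 2))) ^ ((r - 1) / 2) := by
    have hπ : 0 < Real.sqrt Real.pi := Real.sqrt_pos.mpr Real.pi_pos
    have hW : (0:ℝ) < Real.sqrt (θ^2 + σ^2) := Real.sqrt_pos.mpr (by positivity)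
    have hbase : (0:ℝ) < |x - μ| / (2 * Real.sqrt (θ^2 + σ^2)) := by
      apply div_pos (abs_pos.mpr hxm) (by positivity)
    have := Real.rpow_pos_of_pos hbase ((r-1)/2)
    positivity
  have hLfin : besselL ((r-1)/2) (Real.sqrt (θ ^ 2 + σ ^ 2) * |x - μ| / σ ^ 2) ≠ ∞ := by
    intro hL
    rw [hd, hL, ENNReal.mul_top (ENNReal.ofReal_pos.mpr hcoefpos).ne'] at hxfin
    exact absurd hxfin (lt_irrefl _)
  rw [hd, ← my_besselK_eq hLfin, ← ENNReal.ofReal_mul hcoefpos.le]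
  rfl
end

section
/- If (X, Y) is bivariate normal with E X = E Y = 0, Var X = σ_X², Var Y = σ_Y² and correlation ρ, then the product XY has the Variance-Gamma distribution VG₁(1, ρσ_Xσ_Y, σ_Xσ_Y√(1−ρ²), 0). -/
open MeasureTheory ProbabilityTheory

section Aux
open Real Set
open scoped ENNReal NNReal


-- L1': integrability of exp(-a cosh t) on Ioi 0
lemma coshexp_integrableOn {a : ℝ} (ha : 0 < a) :
    IntegrableOn (fun t => Real.exp (-(a * Real.cosh t))) (Ioi (0:ℝ)) := by
  have hbound : ∀ t : ℝ, ‖Real.exp (-(a * Real.cosh t))‖ ≤ Real.exp (-(a/2)) * Real.exp (-(a/2) * t) := by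
    intro t
    rw [Real.norm_eq_abs, Real.abs_exp, ← Real.exp_add]
    apply Real.exp_le_exp.mpr
    have h1 : (1 + t) / 2 ≤ Real.cosh t := by
      have h2 : Real.exp t ≤ 2 * Real.cosh t := by
        rw [Real.cosh_eq]; nlinarith [Real.exp_pos (-t)]
      nlinarith [Real.add_one_le_exp t]
    nlinarith
  refine Integrable.mono' ((exp_neg_integrableOn_Ioi 0 (by linarith : 0 < a/2)).const_mul (Real.exp (-(a/2)))) ?_ (ae_of_all _ hbound)
  exact (Real.continuous_exp.comp ((continuous_const.mul Real.continuous_cosh).neg)).aestronglyMeasurable.restrict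

lemma integrable_even {f : ℝ → ℝ} (he : ∀ x, f (-x) = f x) (hf : IntegrableOn f (Ioi (0:ℝ))) :
    Integrable f := by
  have h1 : IntegrableOn f (Iic (0:ℝ)) := by
    rw [← Measure.map_neg_eq_self (volume : Measure ℝ)]
    have m : MeasurableEmbedding fun x : ℝ => -x := (Homeomorph.neg ℝ).measurableEmbedding
    rw [m.integrableOn_map_iff]
    simp_rw [Function.comp_def, he, neg_preimage, neg_Iic, neg_zero]
    exact (integrableOn_Ici_iff_integrableOn_Ioi).mpr hf
  have := h1.union hf
  rwa [Iic_union_Ioi, integrableOn_univ] at this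

lemma integral_even {f : ℝ → ℝ} (he : ∀ x, f (-x) = f x) :
    ∫ x, f x = 2 * ∫ x in Ioi (0:ℝ), f x := by
  have h : ∀ x, f |x| = f x := by
    intro x
    rcases abs_choice x with h | h
    · rw [h]
    · rw [h, he]
  calc ∫ x, f x = ∫ x, f |x| := by simp_rw [h]
    _ = 2 * ∫ x in Ioi (0:ℝ), f x := integral_comp_abs

lemma besselK_zero_eq (a : ℝ) :
    besselK 0 a = ∫ t in Ioi (0:ℝ), Real.exp (-(a * Real.cosh t)) := by
  unfold besselK
  simp [neg_mul]

lemma besselK_zero_nonneg (a : ℝ) : 0 ≤ besselK 0 a := by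
  rw [besselK_zero_eq]
  exact setIntegral_nonneg measurableSet_Ioi (fun t _ => (Real.exp_pos _).le)

lemma coshexp_integrable {a : ℝ} (ha : 0 < a) :
    Integrable (fun t => Real.exp (-(a * Real.cosh t))) := by
  exact integrable_even (fun t => by rw [Real.cosh_neg]) (coshexp_integrableOn ha)

lemma integral_coshexp {a : ℝ} (ha : 0 < a) :
    ∫ t : ℝ, Real.exp (-(a * Real.cosh t)) = 2 * besselK 0 a := by
  rw [besselK_zero_eq]
  exact integral_even (fun t => by rw [Real.cosh_neg])

section subst
variable {p q : ℝ}

lemma subst_aux (hp : 0 < p) (hq : 0 < q) :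
    (∀ t : ℝ, |Real.sqrt (Real.sqrt (q/p)) * (Real.exp (t/2) * (1/2))| •
      ((Real.sqrt (Real.sqrt (q/p)) * Real.exp (t/2))⁻¹ *
        Real.exp (-(p * (Real.sqrt (Real.sqrt (q/p)) * Real.exp (t/2))^2
          + q / (Real.sqrt (Real.sqrt (q/p)) * Real.exp (t/2))^2)))
      = 2⁻¹ * Real.exp (-(2 * Real.sqrt (p*q) * Real.cosh t))) := by
  intro t
  set b := Real.sqrt (Real.sqrt (q/p)) with hbdef
  have hbpos : 0 < b := Real.sqrt_pos.mpr (Real.sqrt_pos.mpr (by positivity))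
  have hb2 : b^2 = Real.sqrt (q/p) := Real.sq_sqrt (Real.sqrt_nonneg _)
  have hpb : p * b^2 = Real.sqrt (p*q) := by
    rw [hb2, show p * Real.sqrt (q/p) = Real.sqrt (p^2) * Real.sqrt (q/p) by
        rw [Real.sqrt_sq hp.le],
      ← Real.sqrt_mul (by positivity)]
    congr 1
    field_simp
  have hqb : q / b^2 = Real.sqrt (p*q) := by
    rw [hb2, div_eq_iff (by positivity : Real.sqrt (q/p) ≠ 0), ← Real.sqrt_mul (by positivity),
      show p * q * (q/p) = q^2 by field_simp, Real.sqrt_sq hq.le]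
  have hexp : (b * Real.exp (t/2))^2 = b^2 * Real.exp t := by
    rw [mul_pow, sq (Real.exp (t/2)), ← Real.exp_add]
    norm_num
  have harg : p * (b * Real.exp (t/2))^2 + q / (b * Real.exp (t/2))^2
      = 2 * Real.sqrt (p*q) * Real.cosh t := by
    rw [hexp, Real.cosh_eq]
    have h1 : p * (b^2 * Real.exp t) = Real.sqrt (p*q) * Real.exp t := by rw [← hpb]; ring
    have h2 : q / (b^2 * Real.exp t) = Real.sqrt (p*q) * Real.exp (-t) := by
      rw [Real.exp_neg, eq_comm, mul_comm, inv_mul_eq_div, div_eq_div_iff (Real.exp_pos t).ne'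
        (by positivity), ← hqb]
      field_simp
    rw [h1, h2, Real.exp_neg]
    ring
  rw [harg, smul_eq_mul, abs_of_pos (by positivity)]
  rw [show b * (Real.exp (t/2) * (1/2)) * ((b * Real.exp (t/2))⁻¹ * Real.exp (-(2 * Real.sqrt (p*q) * Real.cosh t))) = (b * Real.exp (t/2)) * (b * Real.exp (t/2))⁻¹ * (1/2) * Real.exp (-(2 * Real.sqrt (p*q) * Real.cosh t)) by ring]
  rw [mul_inv_cancel₀ (by positivity)]
  ring

lemma subst_image (hp : 0 < p) (hq : 0 < q) :
    (fun t : ℝ => Real.sqrt (Real.sqrt (q/p)) * Real.exp (t/2)) '' univ = Ioi (0:ℝ) := by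
  set b := Real.sqrt (Real.sqrt (q/p)) with hbdef
  have hbpos : 0 < b := Real.sqrt_pos.mpr (Real.sqrt_pos.mpr (by positivity))
  ext y
  simp only [image_univ, mem_range, mem_Ioi]
  constructor
  · rintro ⟨t, rfl⟩; positivity
  · intro hy
    refine ⟨2 * Real.log (y / b), ?_⟩
    rw [show 2 * Real.log (y/b) / 2 = Real.log (y/b) by ring, Real.exp_log (by positivity)]
    field_simp

lemma subst_deriv (hp : 0 < p) (hq : 0 < q) : ∀ t ∈ (univ : Set ℝ),
    HasDerivWithinAt (fun t : ℝ => Real.sqrt (Real.sqrt (q/p)) * Real.exp (t/2))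
      (Real.sqrt (Real.sqrt (q/p)) * (Real.exp (t/2) * (1/2))) univ t := by
  intro t _
  exact (((hasDerivAt_id t).div_const 2).exp.const_mul _).hasDerivWithinAt

lemma subst_inj (hp : 0 < p) (hq : 0 < q) :
    InjOn (fun t : ℝ => Real.sqrt (Real.sqrt (q/p)) * Real.exp (t/2)) univ := by
  have hbpos : 0 < Real.sqrt (Real.sqrt (q/p)) := Real.sqrt_pos.mpr (Real.sqrt_pos.mpr (by positivity))
  intro a _ c _ h
  simp only at h
  have := mul_left_cancel₀ hbpos.ne' h
  have := Real.exp_injective this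
  linarith

lemma integral_subst (hp : 0 < p) (hq : 0 < q) :
    ∫ z in Ioi (0:ℝ), z⁻¹ * Real.exp (-(p * z^2 + q / z^2)) = besselK 0 (2 * Real.sqrt (p*q)) := by
  rw [← subst_image hp hq,
    integral_image_eq_integral_abs_deriv_smul MeasurableSet.univ (subst_deriv hp hq) (subst_inj hp hq)]
  simp_rw [subst_aux hp hq]
  rw [Measure.restrict_univ, integral_const_mul, integral_coshexp (by positivity), ← mul_assoc]
  norm_num

lemma integrableOn_subst (hp : 0 < p) (hq : 0 < q) :
    IntegrableOn (fun z : ℝ => z⁻¹ * Real.exp (-(p * z^2 + q / z^2))) (Ioi (0:ℝ)) := by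
  rw [← subst_image hp hq,
    integrableOn_image_iff_integrableOn_abs_deriv_smul MeasurableSet.univ (subst_deriv hp hq) (subst_inj hp hq)]
  simp_rw [subst_aux hp hq]
  rw [integrableOn_univ]
  exact (coshexp_integrable (by positivity)).const_mul _

end subst

section full
variable {p q : ℝ}

lemma hprime_even (z : ℝ) : |(-z)|⁻¹ * Real.exp (-(p * (-z)^2 + q / (-z)^2))
    = |z|⁻¹ * Real.exp (-(p * z^2 + q / z^2)) := by
  rw [abs_neg, neg_sq]

lemma integrable_hprime (hp : 0 < p) (hq : 0 < q) :
    Integrable (fun z : ℝ => |z|⁻¹ * Real.exp (-(p * z^2 + q / z^2))) := by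
  refine integrable_even hprime_even ?_
  refine (integrableOn_congr_fun ?_ measurableSet_Ioi).mpr (integrableOn_subst hp hq)
  intro z hz
  simp only []
  rw [abs_of_pos hz]

lemma integral_hprime (hp : 0 < p) (hq : 0 < q) :
    ∫ z : ℝ, |z|⁻¹ * Real.exp (-(p * z^2 + q / z^2)) = 2 * besselK 0 (2 * Real.sqrt (p*q)) := by
  rw [integral_even hprime_even, ← integral_subst hp hq]
  congr 1
  refine setIntegral_congr_fun measurableSet_Ioi ?_
  intro z hz
  simp only []
  rw [abs_of_pos hz]
end full

lemma key_lemma {c τ ρ x : ℝ} (hc : 0 < c) (hτ : 0 < τ) (hρτ : ρ^2 + τ^2 = 1) (hx : x ≠ 0) :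
    ∫⁻ z : ℝ, gaussianPDF 0 1 z * ENNReal.ofReal ((Real.sqrt (2*π*(c*τ*z)^2))⁻¹ *
        Real.exp (-(x - c*ρ*z^2)^2 / (2*(c*τ*z)^2)))
      = ENNReal.ofReal (vg1pdf 1 (ρ*c) (c*τ) 0 x) := by
  have hπ : (0:ℝ) < π := Real.pi_pos
  set p : ℝ := (2*τ^2)⁻¹ with hpdef
  set q : ℝ := x^2 * (2*c^2*τ^2)⁻¹ with hqdef
  have hp : 0 < p := by positivity
  have hq : 0 < q := by positivity
  set C : ℝ := (2*π*c*τ)⁻¹ * Real.exp (ρ*x/(c*τ^2)) with hCdef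
  have hC0 : 0 ≤ C := by positivity
  -- Step A: a.e. rewrite of the integrand
  have hae : ∀ᵐ z : ℝ, z ≠ 0 := by
    rw [ae_iff]
    convert Real.volume_singleton (a := 0) using 2
    ext z; simp
  have hstep : ∫⁻ z : ℝ, gaussianPDF 0 1 z * ENNReal.ofReal ((Real.sqrt (2*π*(c*τ*z)^2))⁻¹ *
        Real.exp (-(x - c*ρ*z^2)^2 / (2*(c*τ*z)^2)))
      = ∫⁻ z : ℝ, ENNReal.ofReal (C * (|z|⁻¹ * Real.exp (-(p * z^2 + q / z^2)))) := by
    refine lintegral_congr_ae (hae.mono fun z hz => ?_)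
    dsimp only
    rw [show gaussianPDF 0 1 z = ENNReal.ofReal (gaussianPDFReal 0 1 z) from rfl, ← ENNReal.ofReal_mul (gaussianPDFReal_nonneg 0 1 z)]
    congr 1
    have hz2 : z^2 ≠ 0 := pow_ne_zero 2 hz
    have habs : 0 < |z| := abs_pos.mpr hz
    have hsqrt1 : Real.sqrt (2*π*(c*τ*z)^2) = Real.sqrt (2*π) * (c*τ*|z|) := by
      rw [Real.sqrt_mul (by positivity), Real.sqrt_sq_eq_abs, abs_mul, abs_mul,
        abs_of_pos hc, abs_of_pos hτ]
    have hpdfreal : gaussianPDFReal 0 1 z = (Real.sqrt (2*π))⁻¹ * Real.exp (-z^2/2) := by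
      unfold gaussianPDFReal
      norm_num
    rw [hpdfreal, hsqrt1]
    have key1 : ∀ (A B E F : ℝ), (A * Real.exp E) * (B * Real.exp F)
        = (A*B) * Real.exp (E+F) := by
      intros A B E F; rw [Real.exp_add]; ring
    rw [mul_inv (Real.sqrt (2*π)) (c*τ*|z|), key1, hCdef,
      show (2*π*c*τ)⁻¹ * Real.exp (ρ*x/(c*τ^2)) * (|z|⁻¹ * Real.exp (-(p * z^2 + q / z^2)))
        = ((2*π*c*τ)⁻¹ * |z|⁻¹) * Real.exp (ρ*x/(c*τ^2) + -(p * z^2 + q / z^2)) from by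
          rw [Real.exp_add]; ring]
    congr 1
    · -- constants
      rw [← mul_assoc, ← mul_inv, Real.mul_self_sqrt (by positivity)]
      field_simp
    · -- exponents
      congr 1
      rw [hpdef, hqdef]
      field_simp
      ring_nf
      linear_combination (-(z^4*c^2)) * hρτ
  rw [hstep]
  simp_rw [ENNReal.ofReal_mul hC0]
  rw [lintegral_const_mul' _ _ ENNReal.ofReal_ne_top,
    ← MeasureTheory.ofReal_integral_eq_lintegral_ofReal (integrable_hprime hp hq)
      (ae_of_all _ fun z => by positivity),
    integral_hprime hp hq, ← ENNReal.ofReal_mul hC0]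
  congr 1
  -- Step E : constants
  have hsqpq : Real.sqrt (p*q) = |x| / (2*c*τ^2) := by
    have hpq : p*q = (|x|/(2*c*τ^2))^2 := by
      rw [div_pow, sq_abs, hpdef, hqdef, eq_div_iff (by positivity : (2*c*τ^2)^2 ≠ 0)]
      field_simp
    rw [hpq, Real.sqrt_sq (by positivity)]
  have hsq : Real.sqrt ((ρ*c)^2 + (c*τ)^2) = c := by
    rw [show (ρ*c)^2 + (c*τ)^2 = c^2 from by linear_combination c^2 * hρτ,
      Real.sqrt_sq hc.le]
  unfold vg1pdf
  rw [sub_zero, hsq, show ((1:ℝ)-1)/2 = 0 from by norm_num, Real.rpow_zero,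
    Real.Gamma_one_half_eq,
    show c * τ * Real.sqrt π * Real.sqrt π = c * τ * π from by
      rw [mul_assoc, Real.mul_self_sqrt hπ.le]]
  rw [hsqpq, hCdef]
  rw [show 2 * (|x| / (2*c*τ^2)) = |x|/(c*τ^2) from by ring,
    show ρ*c*x/(c*τ)^2 = ρ*x/(c*τ^2) from by field_simp,
    show c*|x|/(c*τ)^2 = |x|/(c*τ^2) from by field_simp]
  field_simp

end Aux

open scoped ENNReal NNReal
open Real Set

/-- Bivariate normal product: modelling `(X, Y)` bivariate normal with zero means,
variances `σX²`, `σY²` and correlation `ρ` via the standard construction from two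
independent standard normals. The product `XY` is `VG₁(1, ρσXσY, σXσY√(1-ρ²), 0)`. -/
theorem stmt10 {Ω : Type*} [MeasureSpace Ω] [IsProbabilityMeasure (ℙ : Measure Ω)]
    (σX σY ρ : ℝ) (hσX : 0 < σX) (hσY : 0 < σY) (hρ : -1 < ρ) (hρ' : ρ < 1)
    (Z W : Ω → ℝ) (hZ : Measurable Z) (hW : Measurable W)
    (hZlaw : Measure.map Z ℙ = gaussianReal 0 1)
    (hWlaw : Measure.map W ℙ = gaussianReal 0 1)
    (hind : IndepFun Z W ℙ)
    (X Y : Ω → ℝ)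
    (hXY : ∀ ω, X ω = σX * Z ω ∧ Y ω = σY * (ρ * Z ω + Real.sqrt (1 - ρ ^ 2) * W ω)) :
    Measure.map (fun ω => X ω * Y ω) ℙ
      = vg1measure 1 (ρ * σX * σY) (σX * σY * Real.sqrt (1 - ρ ^ 2)) 0 := by
  have hτpos : 0 < Real.sqrt (1 - ρ^2) := Real.sqrt_pos.mpr (by nlinarith)
  set τ := Real.sqrt (1 - ρ^2) with hτdef
  set c := σX * σY with hcdef
  have hc : 0 < c := mul_pos hσX hσY
  have hρτ : ρ^2 + τ^2 = 1 := by rw [hτdef, Real.sq_sqrt (by nlinarith)]; ring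
  rw [show ρ * σX * σY = ρ * c from by rw [hcdef]; ring]
  set g : ℝ × ℝ → ℝ := fun p => c*τ*p.1*p.2 + c*ρ*p.1^2 with hgdef
  have hg : Measurable g := by fun_prop
  have hcomp : (fun ω => X ω * Y ω) = g ∘ (fun ω => (Z ω, W ω)) := by
    funext ω
    obtain ⟨hX1, hY1⟩ := hXY ω
    simp only [Function.comp_apply, hgdef, hX1, hY1, hcdef]
    ring
  rw [hcomp, ← Measure.map_map hg (hZ.prodMk hW),
    (indepFun_iff_map_prod_eq_prod_map_map hZ.aemeasurable hW.aemeasurable).mp hind,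
    hZlaw, hWlaw]
  unfold vg1measure
  ext s hs
  rw [Measure.map_apply hg hs, withDensity_apply _ hs, Measure.prod_apply (hg hs)]
  set G : ℝ → ℝ → ℝ≥0∞ := fun z x => ENNReal.ofReal ((Real.sqrt (2*π*(c*τ*z)^2))⁻¹ *
      Real.exp (-(x - c*ρ*z^2)^2 / (2*(c*τ*z)^2))) with hGdef
  have hGmeas : Measurable (Function.uncurry G) := by
    apply Measurable.ennreal_ofReal
    fun_prop
  have h0 : ∀ᵐ z ∂(gaussianReal 0 1), z ≠ 0 := by
    rw [ae_iff]
    have hset : {z : ℝ | ¬ z ≠ 0} = {0} := by ext z; simp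
    rw [hset]
    exact gaussianReal_absolutelyContinuous 0 one_ne_zero Real.volume_singleton
  have hmeasinner : ∀ᵐ z ∂(gaussianReal 0 1),
      (gaussianReal 0 1) (Prod.mk z ⁻¹' (g ⁻¹' s)) = ∫⁻ x in s, G z x := by
    filter_upwards [h0] with z hz
    have hVpos : (0:ℝ) < (c*τ*z)^2 := by positivity
    have hVne : (⟨(c*τ*z)^2, sq_nonneg _⟩ : ℝ≥0) ≠ 0 := by
      exact fun h => hVpos.ne' (congrArg Subtype.val h)
    have hpre : Prod.mk z ⁻¹' (g ⁻¹' s) = (fun w => c*τ*z*w + c*ρ*z^2) ⁻¹' s := rfl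
    have hfmeas : Measurable (fun w : ℝ => c*τ*z*w + c*ρ*z^2) := by fun_prop
    have hmap : (gaussianReal 0 1).map (fun w => c*τ*z*w + c*ρ*z^2)
        = gaussianReal (c*ρ*z^2) ⟨(c*τ*z)^2, sq_nonneg _⟩ := by
      have h1 : (fun w : ℝ => c*τ*z*w + c*ρ*z^2)
          = (· + c*ρ*z^2) ∘ ((c*τ*z) * ·) := by
        funext w
        simp [Function.comp]
      rw [h1, ← Measure.map_map (measurable_id'.add_const _) (measurable_const_mul _),
        gaussianReal_map_const_mul, gaussianReal_map_add_const]
      congr 1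
      · ring
      · rw [mul_one]; rfl
    rw [hpre, ← Measure.map_apply hfmeas hs, hmap, gaussianReal_apply _ hVne]
    refine setLIntegral_congr_fun hs (fun x _ => ?_)
    simp only [hGdef, gaussianPDF, gaussianPDFReal, NNReal.coe_mk, sub_zero]
    rfl
  rw [lintegral_congr_ae hmeasinner, gaussianReal_of_var_ne_zero 0 one_ne_zero,
    lintegral_withDensity_eq_lintegral_mul _ (measurable_gaussianPDF 0 1)
      (hGmeas.lintegral_prod_right)]
  have hne : ∀ z : ℝ, gaussianPDF 0 1 z ≠ ⊤ := fun z => ENNReal.ofReal_ne_top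
  have hswap : ∫⁻ z, (gaussianPDF 0 1 * fun z => ∫⁻ x in s, G z x) z ∂volume
      = ∫⁻ x in s, ∫⁻ z, gaussianPDF 0 1 z * G z x ∂volume := by
    simp only [Pi.mul_apply]
    rw [show (fun z => gaussianPDF 0 1 z * ∫⁻ x in s, G z x)
        = fun z => ∫⁻ x in s, gaussianPDF 0 1 z * G z x from
      funext fun z => (lintegral_const_mul' _ _ (hne z)).symm]
    exact lintegral_lintegral_swap
      ((measurable_gaussianPDF 0 1).comp measurable_fst |>.mul hGmeas |>.aemeasurable)
  rw [hswap]
  have hx0 : ∀ᵐ x ∂(volume.restrict s), x ≠ (0:ℝ) := by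
    refine ae_restrict_of_ae ?_
    rw [ae_iff]
    have hset : {x : ℝ | ¬ x ≠ 0} = {0} := by ext x; simp
    rw [hset]
    exact Real.volume_singleton
  exact lintegral_congr_ae (hx0.mono fun x hx => key_lemma hc hτpos hρτ hx)
end

section
/- If W ~ VG₂(ν, α, β, 0) and |t + β| < α, then the moment generating function satisfies E[e^{tW}] = ((α² − β²)/(α² − (β+t)²))^{ν + 1/2}. -/
open MeasureTheory ProbabilityTheory
open Real Set
open scoped ENNReal NNReal

lemma sq_div_eight_le_cosh (s : ℝ) : s ^ 2 / 8 ≤ Real.cosh s := by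
  rw [← Real.cosh_abs, Real.cosh_eq]
  have h2 : (1 : ℝ) + |s| / 2 ≤ Real.exp (|s| / 2) := by
    have := Real.add_one_le_exp (|s| / 2); linarith
  have h3 : Real.exp |s| = Real.exp (|s| / 2) ^ 2 := by
    rw [sq, ← Real.exp_add]; congr 1; ring
  have h4 : (0:ℝ) < Real.exp (-|s|) := Real.exp_pos _
  have h5 : (0:ℝ) ≤ |s| := abs_nonneg s
  have h6 : |s| ^ 2 = s ^ 2 := sq_abs s
  nlinarith

lemma integrable_gauss (m : ℝ) {c : ℝ} (hc : 0 < c) :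
    Integrable fun x : ℝ => Real.exp (m * x - c * x ^ 2) := by
  have h : (fun x : ℝ => Real.exp (m * x - c * x ^ 2))
      = fun x => Real.exp (m ^ 2 / (4 * c)) * Real.exp (-c * (x - m / (2 * c)) ^ 2) := by
    ext x; rw [← Real.exp_add]; congr 1; field_simp; ring
  rw [h]
  exact ((integrable_exp_neg_mul_sq hc).comp_sub_right _).const_mul _

lemma integral_gauss (m : ℝ) {c : ℝ} (hc : 0 < c) :
    ∫ x : ℝ, Real.exp (m * x - c * x ^ 2)
      = Real.sqrt (π / c) * Real.exp (m ^ 2 / (4 * c)) := by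
  have h : (fun x : ℝ => Real.exp (m * x - c * x ^ 2))
      = fun x => Real.exp (m ^ 2 / (4 * c)) * Real.exp (-c * (x - m / (2 * c)) ^ 2) := by
    ext x; rw [← Real.exp_add]; congr 1; field_simp; ring
  rw [h, MeasureTheory.integral_const_mul, integral_sub_right_eq_self (fun x => Real.exp (-c * x ^ 2)),
    integral_gaussian]
  ring

lemma integrable_coshkernel {z : ℝ} (hz : 0 < z) (ν : ℝ) :
    Integrable fun s : ℝ => Real.exp (ν * s - z * Real.cosh s) := by
  apply Integrable.mono' (integrable_gauss ν (by positivity : (0:ℝ) < z / 8))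
  · exact (Continuous.rexp (by continuity)).aestronglyMeasurable
  · filter_upwards with s
    rw [Real.norm_eq_abs, abs_of_pos (Real.exp_pos _)]
    apply Real.exp_le_exp.2
    have h := sq_div_eight_le_cosh s
    nlinarith

lemma exp_image_eq (ν z : ℝ) (x : ℝ) :
    Real.exp x * ((Real.exp x) ^ (ν - 1) * Real.exp (-(z / 2) * (Real.exp x + (Real.exp x)⁻¹)))
      = Real.exp (ν * x - z * Real.cosh x) := by
  rw [Real.rpow_def_of_pos (Real.exp_pos x), Real.log_exp, ← Real.exp_neg, Real.cosh_eq,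
    ← Real.exp_add, ← Real.exp_add]
  congr 1; ring

lemma besselK_rep (ν : ℝ) {z : ℝ} (hz : 0 < z) :
    2 * besselK ν z = ∫ g in Ioi (0 : ℝ), g ^ (ν - 1) * Real.exp (-(z / 2) * (g + g⁻¹)) := by
  have hint : ∀ m : ℝ, Integrable fun s : ℝ => Real.exp (m * s - z * Real.cosh s) :=
    fun m => integrable_coshkernel hz m
  have heq : (fun x : ℝ => |Real.exp x| •
        ((Real.exp x) ^ (ν - 1) * Real.exp (-(z / 2) * (Real.exp x + (Real.exp x)⁻¹))))
      = fun x => Real.exp (ν * x - z * Real.cosh x) := by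
    ext x; rw [abs_of_pos (Real.exp_pos x), smul_eq_mul]; exact exp_image_eq ν z x
  have h1 : besselK ν z = ∫ s in Ioi (0 : ℝ),
      (Real.exp (ν * s - z * Real.cosh s) + Real.exp (-ν * s - z * Real.cosh s)) / 2 := by
    unfold besselK
    refine setIntegral_congr_fun measurableSet_Ioi fun s _ => ?_
    rw [Real.cosh_eq (ν * s)]
    rw [Real.exp_sub, Real.exp_sub, Real.exp_neg, neg_mul, Real.exp_neg, neg_mul, Real.exp_neg]
    have h := Real.exp_ne_zero (z * Real.cosh s)
    have h2 := Real.exp_ne_zero (ν * s)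
    field_simp
  have h2 : ∫ s in Ioi (0 : ℝ), Real.exp (-ν * s - z * Real.cosh s)
      = ∫ s in Iic (0 : ℝ), Real.exp (ν * s - z * Real.cosh s) := by
    have h := integral_comp_neg_Ioi (0 : ℝ) (fun s => Real.exp (ν * s - z * Real.cosh s))
    rw [neg_zero] at h
    rw [← h]
    refine setIntegral_congr_fun measurableSet_Ioi fun s _ => ?_
    rw [Real.cosh_neg]
    congr 1; ring
  have h3 := intervalIntegral.integral_Iic_add_Ioi (b := (0:ℝ)) (hint ν).integrableOn (hint ν).integrableOn
  have h4 : ∫ g in Ioi (0 : ℝ), g ^ (ν - 1) * Real.exp (-(z / 2) * (g + g⁻¹))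
      = ∫ s : ℝ, Real.exp (ν * s - z * Real.cosh s) := by
    rw [← Real.range_exp, ← image_univ,
      integral_image_eq_integral_abs_deriv_smul MeasurableSet.univ
        (fun x _ => (Real.hasDerivAt_exp x).hasDerivWithinAt) Real.exp_injective.injOn]
    rw [Measure.restrict_univ]
    congr 1
  rw [h1, integral_div, h4]
  rw [integral_add (hint ν).integrableOn ((hint (-ν)).integrableOn), h2, ← h3]
  ring
lemma besselK_rep_integrable (ν : ℝ) {z : ℝ} (hz : 0 < z) :
    IntegrableOn (fun g : ℝ => g ^ (ν - 1) * Real.exp (-(z / 2) * (g + g⁻¹))) (Ioi 0) := by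
  have heq : (fun x : ℝ => |Real.exp x| •
        ((Real.exp x) ^ (ν - 1) * Real.exp (-(z / 2) * (Real.exp x + (Real.exp x)⁻¹))))
      = fun x => Real.exp (ν * x - z * Real.cosh x) := by
    ext x; rw [abs_of_pos (Real.exp_pos x), smul_eq_mul]; exact exp_image_eq ν z x
  rw [← Real.range_exp, ← image_univ,
    integrableOn_image_iff_integrableOn_abs_deriv_smul MeasurableSet.univ
      (fun x _ => (Real.hasDerivAt_exp x).hasDerivWithinAt) Real.exp_injective.injOn]
  rw [IntegrableOn, Measure.restrict_univ, heq]
  exact integrable_coshkernel hz ν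

lemma besselK_stronglyMeasurable (ν : ℝ) : StronglyMeasurable (besselK ν) := by
  have h : Continuous (fun p : ℝ × ℝ => Real.exp (-p.1 * Real.cosh p.2) * Real.cosh (ν * p.2)) := by
    fun_prop
  exact h.stronglyMeasurable.integral_prod_right'

section scaled
variable {ν α x : ℝ}

lemma comp_eq (hα : 0 < α) (hx : x ≠ 0) {u : ℝ} (hu : u ∈ Ioi (0:ℝ)) :
    (α / |x| * u) ^ (ν - 1) *
        Real.exp (-(α * |x| / 2) * (α / |x| * u + (α / |x| * u)⁻¹))
      = (α / |x|) ^ (ν - 1) * (u ^ (ν - 1) * Real.exp (-(α ^ 2 * u / 2) - x ^ 2 / (2 * u))) := by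
  have hxa : (0:ℝ) < |x| := abs_pos.2 hx
  rw [Real.mul_rpow (by positivity) (le_of_lt hu), mul_assoc]
  congr 2
  rw [← sq_abs x]
  have h1 : |x| ≠ 0 := ne_of_gt hxa
  have h2 : u ≠ 0 := ne_of_gt hu
  have h3 : α ≠ 0 := ne_of_gt hα
  congr 1
  field_simp
  ring

lemma besselK_scaled (hα : 0 < α) (hx : x ≠ 0) (ν : ℝ) :
    (|x| / (2 * α)) ^ ν * besselK ν (α * |x|)
      = (1/2 : ℝ) ^ ν / 2 *
        ∫ u in Ioi (0:ℝ), u ^ (ν - 1) * Real.exp (-(α ^ 2 * u / 2) - x ^ 2 / (2 * u)) := by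
  have hxa : (0:ℝ) < |x| := abs_pos.2 hx
  have hz : 0 < α * |x| := mul_pos hα hxa
  have hc : (0:ℝ) < α / |x| := by positivity
  have hrep := besselK_rep ν hz
  have hcomp := integral_comp_mul_left_Ioi
    (fun g => g ^ (ν - 1) * Real.exp (-(α * |x| / 2) * (g + g⁻¹))) 0 hc
  rw [mul_zero] at hcomp
  have hcong : ∫ u in Ioi (0:ℝ),
        (α / |x| * u) ^ (ν - 1) *
          Real.exp (-(α * |x| / 2) * (α / |x| * u + (α / |x| * u)⁻¹))
      = (α / |x|) ^ (ν - 1) *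
        ∫ u in Ioi (0:ℝ), u ^ (ν - 1) * Real.exp (-(α ^ 2 * u / 2) - x ^ 2 / (2 * u)) := by
    rw [← MeasureTheory.integral_const_mul]
    exact setIntegral_congr_fun measurableSet_Ioi fun u hu => comp_eq hα hx hu
  rw [hcong] at hcomp
  have hK : besselK ν (α * |x|) = (α / |x|) ^ ν / 2 *
      ∫ u in Ioi (0:ℝ), u ^ (ν - 1) * Real.exp (-(α ^ 2 * u / 2) - x ^ 2 / (2 * u)) := by
    have h2 : (2:ℝ) * besselK ν (α * |x|)
        = (α / |x|) * ((α / |x|) ^ (ν - 1) *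
          ∫ u in Ioi (0:ℝ), u ^ (ν - 1) * Real.exp (-(α ^ 2 * u / 2) - x ^ 2 / (2 * u))) := by
      rw [smul_eq_mul] at hcomp
      have hbeta : (∫ x_1 in Ioi (0:ℝ),
            (fun g => g ^ (ν - 1) * Real.exp (-(α * |x| / 2) * (g + g⁻¹))) x_1)
          = ∫ g in Ioi (0:ℝ), g ^ (ν - 1) * Real.exp (-(α * |x| / 2) * (g + g⁻¹)) := rfl
      rw [hbeta] at hcomp
      rw [hrep, hcomp, ← mul_assoc, mul_inv_cancel₀ (ne_of_gt hc), one_mul]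
    have h3 : (α / |x|) * (α / |x|) ^ (ν - 1) = (α / |x|) ^ ν := by
      nth_rewrite 1 [← Real.rpow_one (α / |x|)]
      rw [← Real.rpow_add hc]; norm_num
    rw [← mul_assoc, h3] at h2
    linarith
  rw [hK, ← mul_assoc]
  congr 1
  rw [mul_div_assoc', ← Real.mul_rpow (by positivity) (le_of_lt hc)]
  have h9 : |x| / (2 * α) * (α / |x|) = 1/2 := by
    field_simp
  rw [h9]
lemma besselK_scaled_integrable (hα : 0 < α) (hx : x ≠ 0) (ν : ℝ) :
    IntegrableOn (fun u : ℝ => u ^ (ν - 1) * Real.exp (-(α ^ 2 * u / 2) - x ^ 2 / (2 * u)))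
      (Ioi 0) := by
  have hxa : (0:ℝ) < |x| := abs_pos.2 hx
  have hz : 0 < α * |x| := mul_pos hα hxa
  have hc : (0:ℝ) < α / |x| := by positivity
  have hG := besselK_rep_integrable ν hz
  have hGc := (integrableOn_Ioi_comp_mul_left_iff
      (fun g : ℝ => g ^ (ν - 1) * Real.exp (-(α * |x| / 2) * (g + g⁻¹))) 0 hc).2
    (by rwa [mul_zero])
  have hne : ((α / |x|) ^ (ν - 1) : ℝ) ≠ 0 := ne_of_gt (Real.rpow_pos_of_pos hc _)
  refine IntegrableOn.congr_fun (hGc.const_mul (((α / |x|) ^ (ν - 1) : ℝ)⁻¹))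
    (fun u hu => ?_) measurableSet_Ioi
  simp only [comp_eq hα hx hu]
  rw [inv_mul_cancel_left₀ hne]
end scaled

lemma integrableOn_rpow_exp {a r : ℝ} (ha : 0 < a) (hr : 0 < r) :
    IntegrableOn (fun u : ℝ => u ^ (a - 1) * Real.exp (-(r * u))) (Ioi 0) := by
  have h1 := (integrableOn_Ioi_comp_mul_left_iff
      (fun x : ℝ => Real.exp (-x) * x ^ (a - 1)) 0 hr).2
    (by rw [mul_zero]; exact Real.GammaIntegral_convergent ha)
  have hne : (r ^ (a - 1) : ℝ) ≠ 0 := ne_of_gt (Real.rpow_pos_of_pos hr _)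
  refine IntegrableOn.congr_fun (h1.const_mul ((r ^ (a - 1) : ℝ)⁻¹))
    (fun u hu => ?_) measurableSet_Ioi
  simp only [Real.mul_rpow hr.le (le_of_lt hu)]
  field_simp

lemma final_const {p ν A B G : ℝ} (hp : p = ν + 1/2) (hA : 0 < A) (hB : 0 < B) (hG : 0 < G) :
    A ^ p / (Real.sqrt π * G) * ((1/2 : ℝ) ^ ν / 2) * (Real.sqrt (2 * π) * ((2 / B) ^ p * G))
      = (A / B) ^ p := by
  have hπ : (0:ℝ) < Real.sqrt π := Real.sqrt_pos.2 Real.pi_pos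
  have h2p : (0:ℝ) < (2:ℝ) ^ p := Real.rpow_pos_of_pos two_pos p
  have hs2π : (0:ℝ) < Real.sqrt (2 * π) := Real.sqrt_pos.2 (by positivity)
  have key : ((1:ℝ)/2) ^ ν * Real.sqrt (2 * π) * (2:ℝ) ^ p = 2 * Real.sqrt π := by
    have hπ0 : (0:ℝ) ≤ π := Real.pi_pos.le
    have e0 : ((1:ℝ)/2) ^ ν = ((2:ℝ) ^ ν)⁻¹ := by
      rw [one_div, Real.inv_rpow (by norm_num)]
    have e2 : Real.sqrt (2 * π) = (2:ℝ)^((1:ℝ)/2) * π^((1:ℝ)/2) := by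
      rw [Real.sqrt_eq_rpow, Real.mul_rpow (by norm_num) hπ0]
    have e3 : Real.sqrt π = π^((1:ℝ)/2) := Real.sqrt_eq_rpow π
    have e1 : (2:ℝ)^((1:ℝ)/2) * (2:ℝ)^(ν+1/2) = 2 * (2:ℝ)^ν := by
      rw [← Real.rpow_add two_pos, show (1:ℝ)/2 + (ν+1/2) = ν + 1 from by ring,
        Real.rpow_add two_pos, Real.rpow_one]
      ring
    have h2ν : (0:ℝ) < (2:ℝ)^ν := Real.rpow_pos_of_pos two_pos ν
    rw [e0, e2, e3, hp]
    rw [show ((2:ℝ)^ν)⁻¹ * ((2:ℝ)^((1:ℝ)/2) * π^((1:ℝ)/2)) * (2:ℝ)^(ν+1/2)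
        = ((2:ℝ)^((1:ℝ)/2) * (2:ℝ)^(ν+1/2)) * π^((1:ℝ)/2) * ((2:ℝ)^ν)⁻¹ from by ring, e1]
    field_simp
  have h5 : ((1:ℝ)/2) ^ ν = 2 * Real.sqrt π / (Real.sqrt (2 * π) * (2:ℝ) ^ p) := by
    rw [eq_div_iff (by positivity)]
    linear_combination key
  rw [Real.div_rpow (by norm_num : (0:ℝ) ≤ 2) hB.le, Real.div_rpow hA.le hB.le, h5]
  have hBp : (0:ℝ) < B ^ p := Real.rpow_pos_of_pos hB p
  field_simp

theorem stmt12 (ν α β t : ℝ) (hν : -1/2 < ν) (hαβ : |β| < α) (ht : |t + β| < α) :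
    ∫ x, Real.exp (t * x) ∂(vg2measure ν α β 0)
      = ((α ^ 2 - β ^ 2) / (α ^ 2 - (β + t) ^ 2)) ^ (ν + 1 / 2) := by
  have hα : 0 < α := (abs_nonneg β).trans_lt hαβ
  have hθ : |β + t| < α := by rwa [add_comm] at ht
  have hA : 0 < α ^ 2 - β ^ 2 := by
    have h := abs_lt.1 hαβ; nlinarith
  have hB : 0 < α ^ 2 - (β + t) ^ 2 := by
    have h := abs_lt.1 hθ; nlinarith
  have hG : 0 < Real.Gamma (ν + 1/2) := Real.Gamma_pos_of_pos (by linarith)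
  have hπ : 0 < Real.sqrt π := Real.sqrt_pos.2 Real.pi_pos
  set θ := β + t with hθdef
  set C : ℝ := (α ^ 2 - β ^ 2) ^ (ν + 1/2) / (Real.sqrt π * Real.Gamma (ν + 1/2)) with hCdef
  have hC : 0 < C := by
    apply div_pos (Real.rpow_pos_of_pos hA _) (by positivity)
  set D : ℝ := C * ((1/2 : ℝ) ^ ν / 2) with hDdef
  have hD : 0 < D := by
    apply mul_pos hC; positivity
  set lam : ℝ := (α ^ 2 - θ ^ 2) / 2 with hlamdef
  have hlam : 0 < lam := by positivity
  -- nonnegativity of the density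
  have hKnn : ∀ y : ℝ, 0 ≤ besselK ν y := fun y =>
    setIntegral_nonneg measurableSet_Ioi fun s _ =>
      mul_nonneg (Real.exp_pos _).le (Real.cosh_pos _).le
  have hpdf_nn : ∀ x, 0 ≤ vg2pdf ν α β 0 x := by
    intro x
    unfold vg2pdf
    exact mul_nonneg (mul_nonneg (mul_nonneg
      (div_nonneg (Real.rpow_nonneg hA.le _) (by positivity))
      (Real.rpow_nonneg (by positivity) ν)) (Real.exp_pos _).le) (hKnn (α * |x - 0|))
  -- measurability
  have hpdf_meas : Measurable (vg2pdf ν α β 0) := by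
    unfold vg2pdf
    have h1 : Measurable fun x : ℝ => besselK ν (α * |x - 0|) :=
      (besselK_stronglyMeasurable ν).measurable.comp (by fun_prop)
    have h2 : Measurable fun x : ℝ => (|x - 0| / (2 * α)) ^ ν := by fun_prop
    exact ((measurable_const.mul h2).mul (by fun_prop)).mul h1
  -- unfold withDensity
  rw [show vg2measure ν α β 0
      = volume.withDensity fun x => (((vg2pdf ν α β 0 x).toNNReal : ℝ≥0) : ℝ≥0∞) from rfl]
  rw [integral_withDensity_eq_integral_smul
    (f := fun x => (vg2pdf ν α β 0 x).toNNReal)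
    (continuous_real_toNNReal.measurable.comp hpdf_meas) _]
  have hsm : ∀ x : ℝ, (vg2pdf ν α β 0 x).toNNReal • Real.exp (t * x)
      = vg2pdf ν α β 0 x * Real.exp (t * x) := by
    intro x; rw [NNReal.smul_def, smul_eq_mul, Real.coe_toNNReal _ (hpdf_nn x)]
  simp only [hsm]
  rw [integral_eq_lintegral_of_nonneg_ae
    (Filter.Eventually.of_forall fun x => mul_nonneg (hpdf_nn x) (Real.exp_pos _).le)
    ((hpdf_meas.mul (by fun_prop)).aestronglyMeasurable)]
  -- the main lintegral computation
  have hmain : (∫⁻ x, ENNReal.ofReal (vg2pdf ν α β 0 x * Real.exp (t * x)))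
      = ENNReal.ofReal (((α ^ 2 - β ^ 2) / (α ^ 2 - θ ^ 2)) ^ (ν + 1/2)) := by
    -- pointwise identity a.e.
    have hae : ∀ᵐ x : ℝ ∂volume, x ≠ 0 := by
      rw [ae_iff]
      have h : {x : ℝ | ¬ x ≠ 0} = {0} := by ext y; simp
      rw [h]; exact measure_singleton 0
    have hptw : ∀ x : ℝ, x ≠ 0 →
        ENNReal.ofReal (vg2pdf ν α β 0 x * Real.exp (t * x))
          = ENNReal.ofReal D * ∫⁻ u in Ioi (0:ℝ),
              ENNReal.ofReal (u ^ (ν - 1) *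
                Real.exp (θ * x - α ^ 2 * u / 2 - x ^ 2 / (2 * u))) := by
      intro x hx
      have h3 : Real.exp (β * x) * Real.exp (t * x) *
            ∫ u in Ioi (0:ℝ), u ^ (ν - 1) * Real.exp (-(α ^ 2 * u / 2) - x ^ 2 / (2 * u))
          = ∫ u in Ioi (0:ℝ), u ^ (ν - 1) *
              Real.exp (θ * x - α ^ 2 * u / 2 - x ^ 2 / (2 * u)) := by
        rw [← Real.exp_add, ← MeasureTheory.integral_const_mul]
        refine setIntegral_congr_fun measurableSet_Ioi fun u hu => ?_
        rw [show θ * x - α ^ 2 * u / 2 - x ^ 2 / (2 * u)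
            = (β * x + t * x) + (-(α ^ 2 * u / 2) - x ^ 2 / (2 * u)) from by rw [hθdef]; ring]
        simp only [Real.exp_add]
        ring
      have hIeq : vg2pdf ν α β 0 x * Real.exp (t * x)
          = D * ∫ u in Ioi (0:ℝ), u ^ (ν - 1) *
              Real.exp (θ * x - α ^ 2 * u / 2 - x ^ 2 / (2 * u)) := by
        unfold vg2pdf
        rw [sub_zero, ← hCdef, hDdef, ← h3]
        linear_combination (C * Real.exp (β * x) * Real.exp (t * x)) * besselK_scaled hα hx ν
      rw [hIeq, ENNReal.ofReal_mul hD.le]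
      congr 1
      rw [ofReal_integral_eq_lintegral_ofReal]
      · have h2 : IntegrableOn (fun u : ℝ => Real.exp (θ * x) *
            (u ^ (ν - 1) * Real.exp (-(α ^ 2 * u / 2) - x ^ 2 / (2 * u)))) (Ioi 0) :=
          (besselK_scaled_integrable hα hx ν).const_mul _
        refine h2.congr_fun (fun u hu => ?_) measurableSet_Ioi
        rw [show θ * x - α ^ 2 * u / 2 - x ^ 2 / (2 * u)
            = (θ * x) + (-(α ^ 2 * u / 2) - x ^ 2 / (2 * u)) from by ring]
        simp only [Real.exp_add]
        ring
      · refine (ae_restrict_iff' measurableSet_Ioi).2 (Filter.Eventually.of_forall fun u hu => ?_)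
        have hu0 : (0:ℝ) ≤ u := le_of_lt hu
        positivity
    rw [lintegral_congr_ae (hae.mono fun x hx => hptw x hx)]
    rw [lintegral_const_mul' _ _ ENNReal.ofReal_ne_top]
    -- Tonelli
    have hswap : (∫⁻ x : ℝ, ∫⁻ u in Ioi (0:ℝ),
          ENNReal.ofReal (u ^ (ν - 1) *
            Real.exp (θ * x - α ^ 2 * u / 2 - x ^ 2 / (2 * u))))
        = ∫⁻ u in Ioi (0:ℝ), ∫⁻ x : ℝ,
            ENNReal.ofReal (u ^ (ν - 1) *
              Real.exp (θ * x - α ^ 2 * u / 2 - x ^ 2 / (2 * u))) := by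
      apply lintegral_lintegral_swap
      apply Measurable.aemeasurable
      apply ENNReal.measurable_ofReal.comp
      fun_prop
    rw [hswap]
    -- inner Gaussian integral
    have hinner : ∀ u ∈ Ioi (0:ℝ),
        (∫⁻ x : ℝ, ENNReal.ofReal (u ^ (ν - 1) *
            Real.exp (θ * x - α ^ 2 * u / 2 - x ^ 2 / (2 * u))))
          = ENNReal.ofReal (Real.sqrt (2 * π) *
              (u ^ (ν - 1/2) * Real.exp (-(lam * u)))) := by
      intro u hu
      have hu0 : (0:ℝ) < u := hu
      have hc : (0:ℝ) < 1 / (2 * u) := by positivity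
      have hsplit : ∀ x : ℝ, u ^ (ν - 1) * Real.exp (θ * x - α ^ 2 * u / 2 - x ^ 2 / (2 * u))
          = (u ^ (ν - 1) * Real.exp (-(α ^ 2 * u / 2))) *
            Real.exp (θ * x - (1 / (2 * u)) * x ^ 2) := by
        intro x
        rw [show θ * x - α ^ 2 * u / 2 - x ^ 2 / (2 * u)
            = (-(α ^ 2 * u / 2)) + (θ * x - (1 / (2 * u)) * x ^ 2) from by field_simp; ring,
          Real.exp_add]
        ring
      have hcu : (0:ℝ) ≤ u ^ (ν - 1) * Real.exp (-(α ^ 2 * u / 2)) :=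
        mul_nonneg (Real.rpow_nonneg hu0.le _) (Real.exp_pos _).le
      simp only [hsplit]
      simp_rw [ENNReal.ofReal_mul hcu]
      rw [lintegral_const_mul' _ _ ENNReal.ofReal_ne_top]
      rw [← ofReal_integral_eq_lintegral_ofReal (integrable_gauss θ hc)
        (Filter.Eventually.of_forall fun x => (Real.exp_pos _).le)]
      rw [integral_gauss θ hc, ← ENNReal.ofReal_mul hcu]
      congr 1
      have h1 : π / (1 / (2 * u)) = (2 * π) * u := by field_simp
      have h2 : θ ^ 2 / (4 * (1 / (2 * u))) = θ ^ 2 * u / 2 := by field_simp; ring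
      rw [h1, h2, Real.sqrt_mul (by positivity) u, Real.sqrt_eq_rpow u]
      rw [show ν - 1/2 = (ν - 1) + (1/2 : ℝ) from by ring, Real.rpow_add hu0,
        show -(lam * u) = -(α ^ 2 * u / 2) + θ ^ 2 * u / 2 from by rw [hlamdef]; ring,
        Real.exp_add]
      ring
    rw [setLIntegral_congr_fun measurableSet_Ioi hinner]
    -- pull out the constant and compute the Gamma integral
    simp_rw [ENNReal.ofReal_mul (Real.sqrt_nonneg (2 * π))]
    rw [lintegral_const_mul' _ _ ENNReal.ofReal_ne_top]
    have hgam_int : IntegrableOn (fun u : ℝ => u ^ (ν - 1/2) * Real.exp (-(lam * u)))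
        (Ioi 0) := by
      have h := integrableOn_rpow_exp (a := ν + 1/2) (by linarith) hlam
      have he : ν + 1/2 - 1 = ν - 1/2 := by ring
      rwa [he] at h
    have hgam_val : ∫ u in Ioi (0:ℝ), u ^ (ν - 1/2) * Real.exp (-(lam * u))
        = (1 / lam) ^ (ν + 1/2) * Real.Gamma (ν + 1/2) := by
      have h := Real.integral_rpow_mul_exp_neg_mul_Ioi
        (a := ν + 1/2) (by linarith) hlam
      have he : ν + 1/2 - 1 = ν - 1/2 := by ring
      rwa [he] at h
    rw [← ofReal_integral_eq_lintegral_ofReal hgam_int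
      ((ae_restrict_iff' measurableSet_Ioi).2 (Filter.Eventually.of_forall fun u hu => by
        have hu0 : (0:ℝ) ≤ u := le_of_lt hu
        positivity))]
    rw [hgam_val]
    rw [← ENNReal.ofReal_mul (Real.sqrt_nonneg _), ← ENNReal.ofReal_mul hD.le]
    congr 1
    have h1 : (1:ℝ) / lam = 2 / (α ^ 2 - θ ^ 2) := by
      rw [hlamdef, one_div_div]
    rw [h1, hDdef, hCdef]
    exact final_const rfl hA hB hG
  rw [hmain, ENNReal.toReal_ofReal (Real.rpow_nonneg (div_nonneg hA.le hB.le) _)]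
end
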